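/- arXiv:1806.04984 — 4 statements merged into one kernel-verified Lean document; each statement's English description precedes it below -/
import Mathlib

section
/- (Parallelogram inequality of Stuhler–Grayson.) Let L₁ and L₂ be sublattices of a Euclidean lattice L with L₁ not contained in L₂. Then μ(L₁ / (L₁ ∩ L₂)) ≥ μ((L₁ + L₂) / L₂), where L₁/(L₁ ∩ L₂) is the quotient lattice of L₁ by its sublattice L₁ ∩ L₂, and (L₁ + L₂)/L₂ is the image of L₁ + L₂ under orthogonal projection onto the orthogonal complement of the real span of L₂. -/
open scoped RealInnerProductSpace Classical

noncomputable section

section LatticeDefs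

variable {E : Type*} [NormedAddCommGroup E] [InnerProductSpace ℝ E] [FiniteDimensional ℝ E]

/-- `L` is a Euclidean lattice in `E`: a finitely generated discrete `ℤ`-submodule
spanning `E` over `ℝ`. -/
def IsEucLattice (L : Submodule ℤ E) : Prop :=
  L.FG ∧ DiscreteTopology L ∧ Submodule.span ℝ (L : Set E) = ⊤

/-- The rank of a lattice: the dimension of its real span. -/
def latRank (L : Submodule ℤ E) : ℕ :=
  Module.finrank ℝ (Submodule.span ℝ (L : Set E))

/-- The volume of a lattice: the square root of the Gram determinant of a `ℤ`-basis
(set to `0` if no finite `ℤ`-basis exists). -/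
def latVol (L : Submodule ℤ E) : ℝ :=
  if h : ∃ n : ℕ, Nonempty (Module.Basis (Fin n) ℤ L) then
    Real.sqrt (Matrix.det (Matrix.of fun i j : Fin h.choose =>
      ⟪(↑(h.choose_spec.some i) : E), (↑(h.choose_spec.some j) : E)⟫))
  else 0

/-- The slope `μ(L) = (vol L) ^ (1 / rk L)`. -/
def latSlope (L : Submodule ℤ E) : ℝ :=
  latVol L ^ ((latRank L : ℝ)⁻¹)

/-- `M` is a (primitive) sublattice of `L`: `M = L ∩ F` for a real subspace `F`. -/
def IsSublatticeOf (L M : Submodule ℤ E) : Prop :=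
  ∃ F : Submodule ℝ E, M = L ⊓ F.restrictScalars ℤ

/-- The minimal slope: the infimum (in fact minimum) of slopes of nonzero sublattices. -/
def muMin (L : Submodule ℤ E) : ℝ :=
  sInf (latSlope '' {M : Submodule ℤ E | IsSublatticeOf L M ∧ M ≠ ⊥})

/-- The orthogonal projection of `E` onto a subspace `F`, as a `ℤ`-linear endomorphism. -/
def projMap (F : Submodule ℝ E) : E →ₗ[ℤ] E :=
  ((F.subtype.comp (F.orthogonalProjectionOnto).toLinearMap)).restrictScalars ℤ

/-- The image `π_F(L)` of a lattice under orthogonal projection onto `F`. -/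
def projLat (F : Submodule ℝ E) (L : Submodule ℤ E) : Submodule ℤ E :=
  L.map (projMap F)

lemma projMap_mem_projLat (F : Submodule ℝ E) (L : Submodule ℤ E) {x : E} (hx : x ∈ L) :
    projMap F x ∈ projLat F L :=
  Submodule.mem_map_of_mem hx

/-- The quotient lattice `L/M`: the image of `L` under the orthogonal projection onto the
orthogonal complement of the real span of `M`. -/
def quotLat (L M : Submodule ℤ E) : Submodule ℤ E :=
  projLat (Submodule.span ℝ (M : Set E))ᗮ L

/-- The maximal slope: the supremum (in fact maximum) of `μ(L/N)` over proper sublattices. -/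
def muMax (L : Submodule ℤ E) : ℝ :=
  sSup ((fun N => latSlope (quotLat L N)) '' {N : Submodule ℤ E | IsSublatticeOf L N ∧ N ≠ L})

/-- `L` is semistable if its minimal slope equals its slope. -/
def Semistable (L : Submodule ℤ E) : Prop :=
  muMin L = latSlope L

/-- `D` is the destabilizing sublattice of `L`: the maximal nonzero sublattice of slope
`μ_min(L)`. -/
def IsDestab (L D : Submodule ℤ E) : Prop :=
  IsSublatticeOf L D ∧ D ≠ ⊥ ∧ latSlope D = muMin L ∧
    ∀ M : Submodule ℤ E, IsSublatticeOf L M → M ≠ ⊥ → latSlope M = muMin L → M ≤ D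

/-- `N₀` is the co-destabilizing sublattice of `L`: the minimal proper sublattice with
`μ(L/N₀) = μ_max(L)`. -/
def IsCodestab (L N₀ : Submodule ℤ E) : Prop :=
  IsSublatticeOf L N₀ ∧ N₀ ≠ L ∧ latSlope (quotLat L N₀) = muMax L ∧
    ∀ N : Submodule ℤ E, IsSublatticeOf L N → N ≠ L → latSlope (quotLat L N) = muMax L → N₀ ≤ N

/-- The dual lattice `L* = {y | ⟨x, y⟩ ∈ ℤ for all x ∈ L}`. -/
def dualLat (L : Submodule ℤ E) : Submodule ℤ E :=
  ⨅ x ∈ L, Submodule.comap (((innerSL ℝ x).toLinearMap).restrictScalars ℤ)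
    (Submodule.span ℤ ({1} : Set ℝ))

end LatticeDefs

section TensorDefs

variable {E F G : Type*}
  [NormedAddCommGroup E] [InnerProductSpace ℝ E] [FiniteDimensional ℝ E]
  [NormedAddCommGroup F] [InnerProductSpace ℝ F] [FiniteDimensional ℝ F]
  [NormedAddCommGroup G] [InnerProductSpace ℝ G] [FiniteDimensional ℝ G]

/-- `t : E → F → G` realizes `G` as the tensor product `E ⊗ F` of inner product spaces:
it satisfies `⟨x ⊗ y, x' ⊗ y'⟩ = ⟨x, x'⟩⟨y, y'⟩`, its image spans `G`, and
`dim G = dim E · dim F`. -/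
def IsTensorProdMap (t : E →ₗ[ℝ] F →ₗ[ℝ] G) : Prop :=
  (∀ (x x' : E) (y y' : F), ⟪t x y, t x' y'⟫ = ⟪x, x'⟫ * ⟪y, y'⟫) ∧
  Submodule.span ℝ (Set.range fun p : E × F => t p.1 p.2) = ⊤ ∧
  Module.finrank ℝ G = Module.finrank ℝ E * Module.finrank ℝ F

/-- The tensor product lattice `L ⊗ M` inside the model `G` of `E ⊗ F`. -/
def tensorLat (t : E →ₗ[ℝ] F →ₗ[ℝ] G) (L : Submodule ℤ E) (M : Submodule ℤ F) :
    Submodule ℤ G :=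
  Submodule.span ℤ {z : G | ∃ x ∈ L, ∃ y ∈ M, z = t x y}

/-- The "tensor product" of two subspaces inside the model `G` of `E ⊗ F`. -/
def tensorSub (t : E →ₗ[ℝ] F →ₗ[ℝ] G) (A : Submodule ℝ E) (B : Submodule ℝ F) :
    Submodule ℝ G :=
  Submodule.span ℝ {z : G | ∃ x ∈ A, ∃ y ∈ B, z = t x y}

end TensorDefs

end


-- ========================================================================
-- Auxiliary material for the proof of statement_6
-- ========================================================================

namespace SGaux

open Matrix
open scoped MatrixOrder

section MatrixFacts

variable {n : ℕ}

lemma eigenvalues_le_one {M : Matrix (Fin n) (Fin n) ℝ} (hM : M.PosSemidef)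
    (hIM : (1 - M).PosSemidef) (i : Fin n) : hM.1.eigenvalues i ≤ 1 := by
  have key := hIM.re_dotProduct_nonneg ⇑(hM.1.eigenvectorBasis i)
  rw [sub_mulVec, one_mulVec, dotProduct_sub, map_sub] at key
  have h2 : RCLike.re (star ⇑(hM.1.eigenvectorBasis i) ⬝ᵥ
      (M *ᵥ ⇑(hM.1.eigenvectorBasis i))) = hM.1.eigenvalues i := (hM.1.eigenvalues_eq i).symm
  have h3 : star ⇑(hM.1.eigenvectorBasis i) ⬝ᵥ ⇑(hM.1.eigenvectorBasis i) = (1:ℝ) := by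
    have hn := hM.1.eigenvectorBasis.orthonormal.1 i
    rw [dotProduct_comm, ← EuclideanSpace.inner_eq_star_dotProduct, real_inner_self_eq_norm_mul_norm, hn,
      mul_one]
  rw [h2, h3] at key
  simpa using key

lemma det_nonneg' {M : Matrix (Fin n) (Fin n) ℝ} (hM : M.PosSemidef) : 0 ≤ M.det := by
  rw [hM.1.det_eq_prod_eigenvalues]
  exact Finset.prod_nonneg fun i _ => hM.eigenvalues_nonneg i

lemma det_le_one {M : Matrix (Fin n) (Fin n) ℝ} (hM : M.PosSemidef)
    (hIM : (1 - M).PosSemidef) : M.det ≤ 1 := by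
  rw [hM.1.det_eq_prod_eigenvalues]
  calc (∏ i, (hM.1.eigenvalues i : ℝ)) ≤ ∏ _i : Fin n, 1 :=
        Finset.prod_le_prod (fun i _ => hM.eigenvalues_nonneg i)
          (fun i _ => eigenvalues_le_one hM hIM i)
    _ = 1 := by simp

lemma det_le_det_add {A B : Matrix (Fin n) (Fin n) ℝ} (hA : A.PosSemidef)
    (hB : B.PosSemidef) : A.det ≤ (A + B).det := by
  classical
  have hAB : (A + B).PosSemidef := hA.add hB
  by_cases hdet : (A + B).det = 0
  · rw [hdet]
    obtain ⟨v, hv0, hv⟩ := (exists_mulVec_eq_zero_iff).2 hdet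
    have hsum : v ⬝ᵥ (A *ᵥ v) + v ⬝ᵥ (B *ᵥ v) = 0 := by
      rw [← dotProduct_add, ← add_mulVec, hv, dotProduct_zero]
    have hAv : v ⬝ᵥ (A *ᵥ v) = 0 := by
      have h1 : 0 ≤ v ⬝ᵥ (A *ᵥ v) := by simpa using hA.dotProduct_mulVec_nonneg v
      have h2 : 0 ≤ v ⬝ᵥ (B *ᵥ v) := by simpa using hB.dotProduct_mulVec_nonneg v
      linarith
    have hSv : CFC.sqrt A *ᵥ v = 0 := by
      rw [← dotProduct_self_eq_zero (v := CFC.sqrt A *ᵥ v)]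
      have hsym : (CFC.sqrt A)ᵀ = CFC.sqrt A := by
        have h := (nonneg_iff_posSemidef.mp (CFC.sqrt_nonneg A)).1
        rwa [Matrix.IsHermitian, conjTranspose_eq_transpose_of_trivial] at h
      calc (CFC.sqrt A *ᵥ v) ⬝ᵥ (CFC.sqrt A *ᵥ v)
          = (v ᵥ* (CFC.sqrt A)ᵀ) ⬝ᵥ (CFC.sqrt A *ᵥ v) := by rw [vecMul_transpose]
        _ = v ⬝ᵥ ((CFC.sqrt A * CFC.sqrt A) *ᵥ v) := by
            rw [hsym, ← dotProduct_mulVec, mulVec_mulVec]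
        _ = 0 := by rw [CFC.sqrt_mul_sqrt_self A (nonneg_iff_posSemidef.mpr hA)]; exact hAv
    have hAv0 : A *ᵥ v = 0 := by
      rw [← CFC.sqrt_mul_sqrt_self A (nonneg_iff_posSemidef.mpr hA), ← mulVec_mulVec, hSv, mulVec_zero]
    have : A.det = 0 := exists_mulVec_eq_zero_iff.1 ⟨v, hv0, hAv0⟩
    simp [this]
  · set S := CFC.sqrt (A + B) with hSdef
    have hSS : S * S = A + B := CFC.sqrt_mul_sqrt_self (A + B) (nonneg_iff_posSemidef.mpr hAB)
    have hdetS : S.det * S.det = (A + B).det := by rw [← det_mul, hSS]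
    have hdS : IsUnit S.det := by
      rw [isUnit_iff_ne_zero]
      intro h
      rw [h, mul_zero] at hdetS
      exact hdet hdetS.symm
    have hsymS : S.IsHermitian := (nonneg_iff_posSemidef.mp (CFC.sqrt_nonneg (A + B))).1
    have hsymSi : (S⁻¹).IsHermitian := hsymS.inv
    have hlow : S⁻¹ᴴ = S⁻¹ := hsymSi
    set M := S⁻¹ * A * S⁻¹ with hM
    have hMps : M.PosSemidef := by
      have := hA.mul_mul_conjTranspose_same S⁻¹
      rwa [hlow] at this
    have hone : S⁻¹ * (A + B) * S⁻¹ = 1 := by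
      rw [← hSS, ← Matrix.mul_assoc, Matrix.mul_assoc (S⁻¹ * S),
        Matrix.mul_nonsing_inv S hdS, Matrix.nonsing_inv_mul S hdS, Matrix.mul_one]
    have hIM : (1 - M).PosSemidef := by
      have h1M : 1 - M = S⁻¹ * B * S⁻¹ := by
        rw [← hone, hM, Matrix.mul_add, Matrix.add_mul]
        abel
      rw [h1M]
      have := hB.mul_mul_conjTranspose_same S⁻¹
      rwa [hlow] at this
    have hdetM : M.det ≤ 1 := det_le_one hMps hIM
    have hdetMnn : 0 ≤ M.det := det_nonneg' hMps
    have hSMS : S * M * S = A := by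
      rw [hM, ← Matrix.mul_assoc, ← Matrix.mul_assoc, Matrix.mul_nonsing_inv S hdS,
        Matrix.one_mul, Matrix.mul_assoc, Matrix.nonsing_inv_mul S hdS, Matrix.mul_one]
    have hdetA : A.det = (A + B).det * M.det := by
      calc A.det = (S * M * S).det := by rw [hSMS]
        _ = S.det * M.det * S.det := by rw [det_mul, det_mul]
        _ = (A + B).det * M.det := by rw [← hdetS]; ring
    rw [hdetA]
    calc (A + B).det * M.det ≤ (A + B).det * 1 :=
          mul_le_mul_of_nonneg_left hdetM (det_nonneg' hAB)
      _ = (A + B).det := mul_one _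

end MatrixFacts

section GramFacts

variable {E : Type*} [NormedAddCommGroup E] [InnerProductSpace ℝ E]

/-- Gram matrix of a family of vectors. -/
noncomputable def gram {n : ℕ} (v : Fin n → E) : Matrix (Fin n) (Fin n) ℝ :=
  Matrix.of fun i j => ⟪v i, v j⟫

lemma gram_posSemidef {n : ℕ} (v : Fin n → E) : (gram v).PosSemidef := by
  refine Matrix.PosSemidef.of_dotProduct_mulVec_nonneg ?_ ?_
  · ext i j
    simp only [gram, conjTranspose_apply, Matrix.of_apply, star_trivial]
    exact real_inner_comm _ _
  · intro x
    have hx : star x = x := by simp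
    have key : star x ⬝ᵥ (gram v *ᵥ x) = ⟪∑ i, x i • v i, ∑ j, x j • v j⟫ := by
      rw [hx, sum_inner]
      simp only [dotProduct, Matrix.mulVec, gram, Matrix.of_apply, dotProduct]
      refine Finset.sum_congr rfl fun i _ => ?_
      rw [real_inner_smul_left, inner_sum Finset.univ (fun j => x j • v j) (v i)]
      simp only [real_inner_smul_right, Finset.mul_sum]
      refine Finset.sum_congr rfl fun j _ => ?_
      ring
    rw [key]
    exact real_inner_self_nonneg

lemma gram_det_basis_change {M : Submodule ℤ E} {n : ℕ} (b c : Module.Basis (Fin n) ℤ M) :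
    (gram (fun i => (b i : E))).det = (gram (fun i => (c i : E))).det := by
  classical
  set P : Matrix (Fin n) (Fin n) ℤ := b.toMatrix ⇑c with hP
  set Q : Matrix (Fin n) (Fin n) ℝ := P.map (Int.cast : ℤ → ℝ) with hQ
  have hc : ∀ j, (c j : E) = ∑ l, ((P l j : ℤ) : ℝ) • (b l : E) := by
    intro j
    have h1 : (c j : M) = ∑ l, P l j • b l := (b.sum_toMatrix_smul_self ⇑c j).symm
    have h2 : ((c j : M) : E) = ((∑ l, P l j • b l : M) : E) := by rw [h1]
    rw [h2]
    push_cast [Submodule.coe_sum]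
    refine Finset.sum_congr rfl fun l _ => ?_
    rw [← Int.cast_smul_eq_zsmul ℝ]
  have hgram : gram (fun i => (c i : E)) = Qᵀ * gram (fun i => (b i : E)) * Q := by
    ext i j
    have lhs : ⟪(c i : E), (c j : E)⟫ =
        ∑ k, ∑ l, Q k i * (gram (fun i => (b i : E)) k l * Q l j) := by
      rw [hc i, hc j, sum_inner]
      refine Finset.sum_congr rfl fun k _ => ?_
      rw [real_inner_smul_left,
        inner_sum Finset.univ (fun l => ((P l j : ℤ) : ℝ) • (b l : E)) ((b k : E))]
      simp only [real_inner_smul_right, Finset.mul_sum]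
      refine Finset.sum_congr rfl fun l _ => ?_
      simp only [gram, Matrix.of_apply, hQ, Matrix.map_apply]
      ring
    have rhs : (Qᵀ * gram (fun i => (b i : E)) * Q) i j =
        ∑ l, ∑ k, Q k i * (gram (fun i => (b i : E)) k l * Q l j) := by
      rw [Matrix.mul_apply]
      refine Finset.sum_congr rfl fun l _ => ?_
      rw [Matrix.mul_apply, Finset.sum_mul]
      refine Finset.sum_congr rfl fun k _ => ?_
      rw [Matrix.transpose_apply]
      ring
    show ⟪(c i : E), (c j : E)⟫ = _
    rw [lhs, rhs, Finset.sum_comm]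
  have hPunit : IsUnit P.det := by
    refine IsUnit.of_mul_eq_one (c.toMatrix ⇑b).det ?_
    rw [← det_mul, Module.Basis.toMatrix_mul_toMatrix_flip, det_one]
  have hQdet : Q.det = ((P.det : ℤ) : ℝ) := by
    rw [hQ]
    have h0 : P.map (Int.cast : ℤ → ℝ) = (Int.castRingHom ℝ).mapMatrix P := rfl
    rw [h0, ← RingHom.map_det]
    rfl
  have hQ2 : Q.det * Q.det = 1 := by
    rcases Int.isUnit_iff.mp hPunit with h | h <;> rw [hQdet, h] <;> norm_num
  rw [hgram, det_mul, det_mul, det_transpose]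
  have hr : Q.det * (gram fun i => (b i : E)).det * Q.det
      = (Q.det * Q.det) * (gram fun i => (b i : E)).det := by ring
  rw [hr, hQ2, one_mul]

lemma gram_det_eq {M : Submodule ℤ E} {n m : ℕ} (b : Module.Basis (Fin n) ℤ M)
    (c : Module.Basis (Fin m) ℤ M) :
    (gram (fun i => (b i : E))).det = (gram (fun i => (c i : E))).det := by
  have e : Fin n ≃ Fin m := b.indexEquiv c
  have hnm : n = m := by simpa using Fintype.card_congr e
  subst hnm
  exact gram_det_basis_change b c

lemma linearIndependent_of_gram_det_ne_zero {n : ℕ} {v : Fin n → E}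
    (h : (gram v).det ≠ 0) : LinearIndependent ℝ v := by
  rw [Fintype.linearIndependent_iff]
  intro a ha
  have hmul : (gram v) *ᵥ a = 0 := by
    ext i
    simp only [Matrix.mulVec, dotProduct, gram, Matrix.of_apply, Pi.zero_apply]
    calc ∑ j, ⟪v i, v j⟫ * a j = ⟪v i, ∑ j, a j • v j⟫ := by
          rw [inner_sum Finset.univ (fun j => a j • v j) (v i)]
          exact Finset.sum_congr rfl fun j _ => by rw [real_inner_smul_right]; ring
      _ = 0 := by rw [ha, inner_zero_right]
  have := Matrix.eq_zero_of_mulVec_eq_zero h hmul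
  exact fun i => congrFun this i

/-- Splitting of the inner product along an orthogonal projection. -/
lemma inner_proj_split [FiniteDimensional ℝ E] (W : Submodule ℝ E) (x y : E) :
    ⟪x, y⟫ = ⟪(Submodule.orthogonalProjectionOnto W x : E), (Submodule.orthogonalProjectionOnto W y : E)⟫ +
      ⟪x - Submodule.orthogonalProjectionOnto W x, y - Submodule.orthogonalProjectionOnto W y⟫ := by
  have hx : x - Submodule.orthogonalProjectionOnto W x ∈ Wᗮ := Submodule.sub_starProjection_mem_orthogonal (K := W) x
  have hy : y - Submodule.orthogonalProjectionOnto W y ∈ Wᗮ := Submodule.sub_starProjection_mem_orthogonal (K := W) y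
  have e1 : ⟪(Submodule.orthogonalProjectionOnto W x : E), y - Submodule.orthogonalProjectionOnto W y⟫ = 0 :=
    Submodule.inner_right_of_mem_orthogonal (Submodule.orthogonalProjectionOnto W x).2 hy
  have e2 : ⟪x - Submodule.orthogonalProjectionOnto W x, (Submodule.orthogonalProjectionOnto W y : E)⟫ = 0 :=
    Submodule.inner_left_of_mem_orthogonal (Submodule.orthogonalProjectionOnto W y).2 hx
  have e1' : ⟪(Submodule.orthogonalProjectionOnto W x : E), y⟫
      - ⟪(Submodule.orthogonalProjectionOnto W x : E), (Submodule.orthogonalProjectionOnto W y : E)⟫ = 0 := by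
    rw [← inner_sub_right]; exact e1
  have e2' : ⟪x, (Submodule.orthogonalProjectionOnto W y : E)⟫
      - ⟪(Submodule.orthogonalProjectionOnto W x : E), (Submodule.orthogonalProjectionOnto W y : E)⟫ = 0 := by
    rw [← inner_sub_left]; exact e2
  simp only [inner_sub_left, inner_sub_right]
  linarith

end GramFacts

section LatticeFacts

variable {E : Type*} [NormedAddCommGroup E] [InnerProductSpace ℝ E] [FiniteDimensional ℝ E]

lemma latVol_eq {M : Submodule ℤ E} {n : ℕ} (b : Module.Basis (Fin n) ℤ M) :
    latVol M = Real.sqrt (gram fun i => ((b i : M) : E)).det := by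
  have hex : ∃ k : ℕ, Nonempty (Module.Basis (Fin k) ℤ M) := ⟨n, ⟨b⟩⟩
  rw [latVol, dif_pos hex]
  congr 1
  exact gram_det_eq hex.choose_spec.some b

lemma span_real_eq {M : Submodule ℤ E} {n : ℕ} (b : Module.Basis (Fin n) ℤ M) :
    Submodule.span ℝ (M : Set E) = Submodule.span ℝ (Set.range fun i => ((b i : M) : E)) := by
  have h1 : Submodule.span ℤ (Set.range fun i => ((b i : M) : E)) = M := by
    apply le_antisymm
    · rw [Submodule.span_le]
      rintro x ⟨i, rfl⟩
      exact (b i).2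
    · intro x hx
      have hmem : (⟨x, hx⟩ : M) ∈ Submodule.span ℤ (Set.range ⇑b) := by
        rw [b.span_eq]; trivial
      have h2 : M.subtype ⟨x, hx⟩ ∈ (Submodule.span ℤ (Set.range ⇑b)).map M.subtype :=
        Submodule.mem_map_of_mem hmem
      rw [Submodule.map_span] at h2
      have h3 : ⇑M.subtype '' Set.range ⇑b = Set.range (fun i => ((b i : M) : E)) := by
        rw [← Set.range_comp]; rfl
      rwa [h3] at h2
  have h4 := congrArg (fun (N : Submodule ℤ E) => Submodule.span ℝ (N : Set E)) h1
  rw [← h4, Submodule.span_span_of_tower]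

lemma latRank_eq {M : Submodule ℤ E} {n : ℕ} (b : Module.Basis (Fin n) ℤ M)
    (hind : LinearIndependent ℝ (fun i => ((b i : M) : E))) : latRank M = n := by
  rw [latRank, span_real_eq b, finrank_span_eq_card hind]
  simp

end LatticeFacts

end SGaux

/-- **parallelogram inequality of Stuhler–Grayson.** If `L₁`, `L₂` are
sublattices of `L` with `L₁ ⊄ L₂`, then `μ(L₁/(L₁ ∩ L₂)) ≥ μ((L₁ + L₂)/L₂)`. -/
theorem statement_6 {E : Type*} [NormedAddCommGroup E] [InnerProductSpace ℝ E]
    [FiniteDimensional ℝ E] (L L₁ L₂ : Submodule ℤ E)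
    (hL : IsEucLattice L) (h1 : IsSublatticeOf L L₁) (h2 : IsSublatticeOf L L₂)
    (hns : ¬ L₁ ≤ L₂) :
    latSlope (quotLat L₁ (L₁ ⊓ L₂)) ≥ latSlope (quotLat (L₁ ⊔ L₂) L₂) := by
  classical
  open SGaux in
  obtain ⟨F₁, hF1⟩ := h1
  obtain ⟨F0, hF2⟩ := h2
  set F₂ : Submodule ℝ E := Submodule.span ℝ (L₂ : Set E) with hF₂def
  set K : Submodule ℝ E := Submodule.span ℝ ((L₁ ⊓ L₂ : Submodule ℤ E) : Set E) with hKdef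
  have hL₁L : L₁ ≤ L := by rw [hF1]; exact inf_le_left
  have hL₂F0 : (L₂ : Set E) ⊆ (F0 : Set E) := by
    intro x hx
    have hx' : x ∈ L ⊓ F0.restrictScalars ℤ := hF2 ▸ hx
    exact hx'.2
  have hF₂F0 : F₂ ≤ F0 := Submodule.span_le.mpr hL₂F0
  have hLF₂ : ∀ x, x ∈ L → x ∈ F₂ → x ∈ L₂ := by
    intro x hxL hxF2
    rw [hF2]
    exact ⟨hxL, hF₂F0 hxF2⟩
  have hKF₂ : K ≤ F₂ := by
    rw [hKdef]
    refine Submodule.span_le.mpr fun x hx => Submodule.subset_span ?_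
    exact (show x ∈ L₁ ⊓ L₂ from hx).2
  set g : E →ₗ[ℤ] E := projMap F₂ᗮ with hg
  set p : E →ₗ[ℤ] E := projMap Kᗮ with hp
  have hgval : ∀ x : E, g x = (Submodule.orthogonalProjectionOnto F₂ᗮ x : E) := fun _ => rfl
  have hpval : ∀ x : E, p x = (Submodule.orthogonalProjectionOnto Kᗮ x : E) := fun _ => rfl
  have hgF₂ : ∀ x ∈ F₂, g x = 0 := by
    intro x hx
    rw [hgval,
      Submodule.orthogonalProjectionOnto_apply_of_mem_orthogonal
        (F₂.le_orthogonal_orthogonal hx)]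
    rfl
  have hker : ∀ x : E, g x = 0 → x ∈ F₂ := by
    intro x hx
    have h2 : Submodule.orthogonalProjectionOnto F₂ᗮ x = 0 := by
      apply Subtype.ext
      rw [← hgval x, hx]
      rfl
    have h1 : x ∈ (F₂ᗮ)ᗮ := Submodule.orthogonalProjectionOnto_eq_zero_iff.mp h2
    rwa [Submodule.orthogonal_orthogonal] at h1
  have hgp : ∀ x : E, g (p x) = g x := by
    intro x
    have hd : x - p x ∈ F₂ := by
      have hxp : x - p x = (Submodule.orthogonalProjectionOnto K x : E) := by
        rw [hpval, Submodule.orthogonalProjectionOnto_orthogonal]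
        exact sub_sub_cancel _ _
      rw [hxp]
      exact hKF₂ (Submodule.orthogonalProjectionOnto K x).2
    have h0 : g (x - p x) = 0 := hgF₂ _ hd
    rw [map_sub] at h0
    have := sub_eq_zero.mp h0
    rw [this]
  have hQ2' : (L₁ ⊔ L₂).map g = L₁.map g := by
    rw [Submodule.map_sup]
    have h2z : L₂.map g = ⊥ := by
      rw [Submodule.eq_bot_iff]
      rintro y ⟨x, hx, rfl⟩
      exact hgF₂ x (Submodule.subset_span hx)
    rw [h2z, sup_bot_eq]
  have hmapQ : (L₁.map p).map g = L₁.map g := by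
    have hcomp : g.comp p = g := LinearMap.ext hgp
    rw [← Submodule.map_comp, hcomp]
  have hinj : ∀ y ∈ L₁.map p, g y = 0 → y = 0 := by
    rintro y ⟨x, hxL₁, rfl⟩ hgy
    have hgx : g x = 0 := by rw [← hgp x]; exact hgy
    have hxF₂ : x ∈ F₂ := hker x hgx
    have hxL₂ : x ∈ L₂ := hLF₂ x (hL₁L hxL₁) hxF₂
    have hxK : x ∈ K := by
      rw [hKdef]
      exact Submodule.subset_span
        (show x ∈ ((L₁ ⊓ L₂ : Submodule ℤ E) : Set E) from ⟨hxL₁, hxL₂⟩)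
    rw [hpval,
      Submodule.orthogonalProjectionOnto_apply_of_mem_orthogonal
        (K.le_orthogonal_orthogonal hxK)]
    rfl
  -- finiteness and freeness of the projected lattice
  haveI hNZ : NoZeroSMulDivisors ℤ E :=
    @IsAddTorsionFree.to_noZeroSMulDivisors_int E _ (IsAddTorsionFree.of_isTorsionFree ℝ E)
  have hL₁fg : L₁.FG := by
    haveI : IsNoetherian ℤ L := isNoetherian_of_fg_of_noetherian L hL.1
    have h5 : (Submodule.comap L.subtype L₁).FG := IsNoetherian.noetherian _
    have h6 : L₁ = (Submodule.comap L.subtype L₁).map L.subtype := by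
      rw [Submodule.map_comap_subtype]
      exact (inf_eq_right.mpr hL₁L).symm
    rw [h6]
    exact h5.map _
  have hQ₁fg : (L₁.map p).FG := hL₁fg.map p
  haveI : Module.Finite ℤ ↥(L₁.map p) := Module.Finite.iff_fg.mpr hQ₁fg
  set n := Module.finrank ℤ ↥(L₁.map p) with hn
  let b : Module.Basis (Fin n) ℤ ↥(L₁.map p) := Module.finBasis ℤ ↥(L₁.map p)
  -- the restricted linear equivalence
  have hmem : ∀ x ∈ L₁.map p, g x ∈ (L₁ ⊔ L₂).map g := by
    intro x hx
    rw [hQ2', ← hmapQ]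
    exact Submodule.mem_map_of_mem hx
  let g' : ↥(L₁.map p) →ₗ[ℤ] ↥((L₁ ⊔ L₂).map g) := g.restrict hmem
  have hg'bij : Function.Bijective g' := by
    constructor
    · intro a a' hab
      have h7 : g (a : E) = g (a' : E) := by
        have h := congrArg (fun z : ↥((L₁ ⊔ L₂).map g) => (z : E)) hab
        simpa [g', LinearMap.restrict_apply] using h
      have h8 : g ((a : E) - (a' : E)) = 0 := by rw [map_sub, h7, sub_self]
      have h9 : ((a : E) - (a' : E)) ∈ L₁.map p := sub_mem a.2 a'.2
      have := hinj _ h9 h8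
      exact Subtype.ext (by rwa [sub_eq_zero] at this)
    · rintro ⟨y, hy⟩
      rw [hQ2', ← hmapQ] at hy
      obtain ⟨x, hx, rfl⟩ := hy
      exact ⟨⟨x, hx⟩, rfl⟩
  let e := LinearEquiv.ofBijective g' hg'bij
  let c : Module.Basis (Fin n) ℤ ↥((L₁ ⊔ L₂).map g) := b.map e
  have hcval : ∀ i, ((c i) : E) = g ((b i) : E) := fun i => rfl
  -- Gram matrix comparison
  have hsplit : gram (fun i => ((b i) : E)) =
      gram (fun i => ((c i) : E)) +
      gram (fun i => ((b i) : E) - g ((b i) : E)) := by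
    ext i j
    have := inner_proj_split F₂ᗮ ((b i : E)) ((b j : E))
    simp only [gram, Matrix.of_apply, Matrix.add_apply, hcval, hgval]
    exact this
  have hdet : (gram (fun i => ((c i) : E))).det ≤ (gram (fun i => ((b i) : E))).det := by
    rw [hsplit]
    exact det_le_det_add (gram_posSemidef _) (gram_posSemidef _)
  have hvol_le : latVol ((L₁ ⊔ L₂).map g) ≤ latVol (L₁.map p) := by
    rw [latVol_eq b, latVol_eq c]
    exact Real.sqrt_le_sqrt hdet
  have hvol2_nonneg : 0 ≤ latVol ((L₁ ⊔ L₂).map g) := by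
    rw [latVol_eq c]
    exact Real.sqrt_nonneg _
  -- Q₂ is nonzero
  have hQ₂ne : (L₁ ⊔ L₂).map g ≠ ⊥ := by
    obtain ⟨x, hx1, hx2⟩ := SetLike.not_le_iff_exists.mp hns
    intro hb
    have hgx : g x ∈ (L₁ ⊔ L₂).map g :=
      Submodule.mem_map_of_mem (Submodule.mem_sup_left hx1)
    rw [hb, Submodule.mem_bot] at hgx
    exact hx2 (hLF₂ x (hL₁L hx1) (hker x hgx))
  -- identify the two quotient lattices
  have hgoal : latSlope ((L₁ ⊔ L₂).map g) ≤ latSlope (L₁.map p) := by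
    rcases eq_or_lt_of_le hvol2_nonneg with h0 | h0
    · -- degenerate case: zero volume
      have hrank2 : latRank ((L₁ ⊔ L₂).map g) ≠ 0 := by
        intro hr
        have hspan : Submodule.span ℝ (((L₁ ⊔ L₂).map g : Submodule ℤ E) : Set E) = ⊥ :=
          Submodule.finrank_eq_zero.mp hr
        apply hQ₂ne
        rw [Submodule.eq_bot_iff]
        intro y hy
        have hyb : y ∈ (⊥ : Submodule ℝ E) := hspan ▸ Submodule.subset_span hy
        simpa using hyb
      rw [latSlope, latSlope, ← h0, Real.zero_rpow]
      · exact Real.rpow_nonneg (le_trans hvol2_nonneg hvol_le) _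
      · simpa using  hrank2
    · -- nondegenerate case
      have hdetc_pos : 0 < (gram (fun i => ((c i) : E))).det :=
        Real.sqrt_pos.mp (by rw [← latVol_eq c]; exact h0)
      have hindc : LinearIndependent ℝ (fun i => ((c i) : E)) :=
        linearIndependent_of_gram_det_ne_zero (ne_of_gt hdetc_pos)
      have hindb : LinearIndependent ℝ (fun i => ((b i) : E)) := by
        let g₀ : E →ₗ[ℝ] E := F₂ᗮ.subtype.comp (Submodule.orthogonalProjectionOnto F₂ᗮ).toLinearMap
        have hcomp : (fun i => ((c i) : E)) = ⇑g₀ ∘ (fun i => ((b i) : E)) :=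
          funext fun i => rfl
        rw [hcomp] at hindc
        exact hindc.of_comp g₀
      have hr1 : latRank (L₁.map p) = n := latRank_eq b hindb
      have hr2 : latRank ((L₁ ⊔ L₂).map g) = n := latRank_eq c hindc
      rw [latSlope, latSlope, hr1, hr2]
      exact Real.rpow_le_rpow hvol2_nonneg hvol_le (by positivity)
  exact hgoal
end

section
/- Let G and H be finite groups and K a field whose characteristic is either zero or coprime to both |G| and |H|. Let E be a finite-dimensional K[G]-module which is multiplicity-free, say E = ⊕_{i=1}^r E_i with E_1, …, E_r pairwise non-isomorphic absolutely irreducible K[G]-submodules, and let F be a finite-dimensional K[H]-module. Regard E ⊗_K F as a K[G×H]-module via (g,h)·(x ⊗ y) = gx ⊗ hy. Then every K[G×H]-submodule U of E ⊗_K F is of the form U = ⊕_{i=1}^r E_i ⊗ F_i for some (possibly zero) K[H]-submodules F_1, …, F_r of F. -/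
noncomputable section

section RepDefs

open scoped TensorProduct

variable {K : Type*} [Field K] {G₀ : Type*} [Group G₀]
  {V : Type*} [AddCommGroup V] [Module K V]
  {W : Type*} [AddCommGroup W] [Module K W]

/-- A subspace invariant under a representation. -/
def RepInvariant (ρ : Representation K G₀ V) (p : Submodule K V) : Prop :=
  ∀ g : G₀, ∀ x ∈ p, ρ g x ∈ p

/-- A representation is irreducible if the space is nonzero and its only invariant
subspaces are `⊥` and `⊤`. -/
def RepIrreducible (ρ : Representation K G₀ V) : Prop :=
  Nontrivial V ∧ ∀ p : Submodule K V, RepInvariant ρ p → p = ⊥ ∨ p = ⊤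

/-- The restriction of a representation to an invariant subspace. -/
def repSub (ρ : Representation K G₀ V) (p : Submodule K V) (h : RepInvariant ρ p) :
    Representation K G₀ p where
  toFun g := (ρ g).restrict (h g)
  map_one' := by
    ext x
    simp [LinearMap.restrict_apply]
  map_mul' g g' := by
    ext x
    simp [LinearMap.restrict_apply]

/-- Extension of scalars of a representation. -/
def repBaseChange (K' : Type*) [Field K'] [Algebra K K'] (ρ : Representation K G₀ V) :
    Representation K' G₀ (K' ⊗[K] V) where
  toFun g := LinearMap.baseChange K' (ρ g)
  map_one' := by
    show LinearMap.baseChange K' (ρ 1) = 1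
    ext v
    simp
  map_mul' g g' := by
    show LinearMap.baseChange K' (ρ (g * g')) = _
    ext v
    simp [Module.End.mul_apply]

/-- A representation is absolutely irreducible if it stays irreducible after extension of
scalars to an algebraic closure. -/
def RepAbsIrreducible (ρ : Representation K G₀ V) : Prop :=
  RepIrreducible (repBaseChange (AlgebraicClosure K) ρ)

/-- Two representations of the same group are isomorphic (equivariantly). -/
def RepEquiv (ρ : Representation K G₀ V) (σ : Representation K G₀ W) : Prop :=
  ∃ e : V ≃ₗ[K] W, ∀ (g : G₀) (x : V), e (ρ g x) = σ g (e x)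

/-- `ρ` is multiplicity-free with `r` components: `V` is the direct sum of `r` pairwise
non-isomorphic absolutely irreducible invariant subspaces. -/
def RepMultFreeWith (ρ : Representation K G₀ V) (r : ℕ) : Prop :=
  ∃ (p : Fin r → Submodule K V) (hinv : ∀ i, RepInvariant ρ (p i)),
    (∀ i, RepAbsIrreducible (repSub ρ (p i) (hinv i))) ∧
    (∀ i j, i ≠ j → ¬ RepEquiv (repSub ρ (p i) (hinv i)) (repSub ρ (p j) (hinv j))) ∧
    iSupIndep p ∧ (⨆ i, p i) = ⊤

/-- `ρ` is multiplicity-free. -/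
def RepMultFree (ρ : Representation K G₀ V) : Prop :=
  ∃ r : ℕ, RepMultFreeWith ρ r

end RepDefs

section ProdTensorRep

open scoped TensorProduct

variable {K : Type*} [Field K] {G H : Type*} [Group G] [Group H]
  {V : Type*} [AddCommGroup V] [Module K V]
  {W : Type*} [AddCommGroup W] [Module K W]

/-- The tensor product representation of `G × H` on `V ⊗ W`. -/
def repProdTensor (ρ : Representation K G V) (σ : Representation K H W) :
    Representation K (G × H) (V ⊗[K] W) where
  toFun gh := TensorProduct.map (ρ gh.1) (σ gh.2)
  map_one' := by
    simp only [Prod.fst_one, Prod.snd_one, map_one]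
    exact TensorProduct.map_one
  map_mul' gh gh' := by
    simp only [Prod.fst_mul, Prod.snd_mul, map_mul]
    exact TensorProduct.map_mul _ _ _ _

end ProdTensorRep

noncomputable section AuxRep

open scoped TensorProduct

variable {K : Type*} [Field K] {G₀ : Type*} [Group G₀]
  {M : Type*} [AddCommGroup M] [Module K M]
  {N : Type*} [AddCommGroup N] [Module K N]

/-- Injectivity of `m ↦ 1 ⊗ m` for a field extension. -/
lemma one_tmul_eq_zero_iff (K' : Type*) [Field K'] [Algebra K K'] (m : M) :
    (1 : K') ⊗ₜ[K] m = 0 ↔ m = 0 := by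
  constructor
  · intro h
    let b := Module.Basis.ofVectorSpace K M
    have h2 := congrArg (Algebra.TensorProduct.basis K' b).repr h
    rw [Algebra.TensorProduct.basis_repr_tmul, map_zero, one_smul] at h2
    have : b.repr m = 0 := by
      ext i
      have := congrArg (fun f => f i) h2
      simp only [Finsupp.mapRange_apply, Finsupp.coe_zero, Pi.zero_apply] at this
      exact (map_eq_zero (algebraMap K K')).mp this
    simpa using congrArg b.repr.symm this
  · rintro rfl; simp

/-- Base change of an invariant subspace is invariant. -/
lemma RepInvariant.baseChange (K' : Type*) [Field K'] [Algebra K K']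
    (τ : Representation K G₀ M) {T : Submodule K M} (hT : RepInvariant τ T) :
    RepInvariant (repBaseChange K' τ) (T.baseChange K') := by
  intro g x hx
  rw [Submodule.baseChange_eq_span] at hx
  induction hx using Submodule.span_induction with
  | mem y hy =>
      obtain ⟨t, ht, rfl⟩ := hy
      exact Submodule.tmul_mem_baseChange_of_mem 1 (hT g t ht)
  | zero => simp
  | add y z _ _ hy hz => rw [map_add]; exact Submodule.add_mem _ hy hz
  | smul a y _ hy =>
      rw [map_smul]
      exact Submodule.smul_mem _ a hy

lemma Submodule.baseChange_eq_range (K' : Type*) [Field K'] [Algebra K K']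
    (T : Submodule K M) :
    T.baseChange K' = LinearMap.range (T.subtype.baseChange K') := by
  apply le_antisymm
  · rw [Submodule.baseChange_eq_span, Submodule.span_le]
    rintro - ⟨t, ht, rfl⟩
    exact ⟨(1 : K') ⊗ₜ ⟨t, ht⟩, rfl⟩
  · rintro - ⟨x, rfl⟩
    induction x with
    | zero => simp
    | tmul a t => exact Submodule.tmul_mem_baseChange_of_mem a t.2
    | add y z hy hz => rw [map_add]; exact Submodule.add_mem _ hy hz

/-- An absolutely irreducible representation of a finite-dimensional space is irreducible. -/
lemma RepAbsIrreducible.repIrreducible [FiniteDimensional K M]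
    (τ : Representation K G₀ M) (habs : RepAbsIrreducible τ) : RepIrreducible τ := by
  obtain ⟨hnt, hirr⟩ := habs
  constructor
  · by_contra h
    have : Subsingleton M := not_nontrivial_iff_subsingleton.mp h
    have : ∀ x : AlgebraicClosure K ⊗[K] M, x = 0 := by
      intro x
      induction x with
      | zero => rfl
      | tmul a m => rw [Subsingleton.elim m 0]; simp
      | add y z hy hz => rw [hy, hz, add_zero]
    rcases hnt with ⟨x, y, hxy⟩
    exact hxy ((this x).trans (this y).symm)
  · intro T hT
    rcases hirr (T.baseChange (AlgebraicClosure K)) (hT.baseChange _ τ) with h | h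
    · left
      rw [eq_bot_iff]
      intro t ht
      have : (1 : AlgebraicClosure K) ⊗ₜ[K] t ∈ T.baseChange (AlgebraicClosure K) :=
        Submodule.tmul_mem_baseChange_of_mem 1 ht
      rw [h, Submodule.mem_bot] at this
      exact (one_tmul_eq_zero_iff _ t).mp this
    · right
      by_contra hTne
      have hlt : T < ⊤ := lt_of_le_of_ne le_top hTne
      have h1 : Module.finrank (AlgebraicClosure K) (T.baseChange (AlgebraicClosure K)) ≤
          Module.finrank K T := by
        rw [Submodule.baseChange_eq_range]
        refine le_trans (LinearMap.finrank_range_le _) ?_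
        rw [Module.finrank_baseChange]
      have h2 : Module.finrank K T < Module.finrank K M := Submodule.finrank_lt hlt.ne
      have h3 : Module.finrank (AlgebraicClosure K) (T.baseChange (AlgebraicClosure K)) =
          Module.finrank (AlgebraicClosure K) (AlgebraicClosure K ⊗[K] M) := by
        rw [h, finrank_top]
      rw [Module.finrank_baseChange] at h3
      omega

end AuxRep
noncomputable section AuxRep2

open scoped TensorProduct

variable {K : Type*} [Field K] {G₀ : Type*} [Group G₀]
  {M : Type*} [AddCommGroup M] [Module K M]
  {N : Type*} [AddCommGroup N] [Module K N]

/-- Schur's lemma, scalar form, for absolutely irreducible representations. -/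
lemma schur_scalar [FiniteDimensional K M] (τ : Representation K G₀ M)
    (habs : RepAbsIrreducible τ) (f : M →ₗ[K] M)
    (hf : ∀ g x, f (τ g x) = τ g (f x)) :
    ∃ c : K, ∀ x, f x = c • x := by
  set K' := AlgebraicClosure K
  set f' := f.baseChange K' with hf'
  have hequi : ∀ g x, f' (repBaseChange K' τ g x) = repBaseChange K' τ g (f' x) := by
    intro g x
    induction x with
    | zero => simp
    | tmul a m =>
        show f' (LinearMap.baseChange K' (τ g) (a ⊗ₜ m)) =
          LinearMap.baseChange K' (τ g) (f' (a ⊗ₜ m))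
        simp [hf']
        rw [hf]
    | add y z hy hz => simp only [map_add, hy, hz]
  have hnt : Nontrivial (K' ⊗[K] M) := habs.1
  obtain ⟨μ, hμ⟩ := Module.End.exists_eigenvalue (f' : Module.End K' (K' ⊗[K] M))
  have hinveig : RepInvariant (repBaseChange K' τ) (Module.End.eigenspace f' μ) := by
    intro g x hx
    rw [Module.End.mem_eigenspace_iff] at hx ⊢
    rw [hequi, hx, map_smul]
  have heig : Module.End.eigenspace f' μ = ⊤ := by
    rcases habs.2 _ hinveig with h | h
    · exact absurd h hμ
    · exact h
  have hall : ∀ y : K' ⊗[K] M, f' y = μ • y := by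
    intro y
    have : y ∈ Module.End.eigenspace f' μ := heig ▸ Submodule.mem_top
    exact Module.End.mem_eigenspace_iff.mp this
  -- extract that μ is in the image of K
  have hnM : Nontrivial M := ((habs.repIrreducible τ) : RepIrreducible τ).1
  obtain ⟨m0, hm0⟩ := exists_ne (0 : M)
  let b := Module.Basis.ofVectorSpace K M
  have hrepr : b.repr m0 ≠ 0 := fun h => hm0 (by simpa using congrArg b.repr.symm h)
  obtain ⟨i, hi⟩ : ∃ i, b.repr m0 i ≠ 0 := by
    by_contra h
    push_neg at h
    exact hrepr (Finsupp.ext h)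
  have key : (1 : K') ⊗ₜ[K] (f m0) = μ • ((1 : K') ⊗ₜ[K] m0) := by
    have := hall ((1 : K') ⊗ₜ[K] m0)
    rw [← this, hf', LinearMap.baseChange_tmul]
  have key2 := congrArg (fun z => (Algebra.TensorProduct.basis K' b).repr z i) key
  simp only [map_smul, Algebra.TensorProduct.basis_repr_tmul, one_smul,
    Finsupp.smul_apply, Finsupp.mapRange_apply] at key2
  have hb : algebraMap K K' (b.repr m0 i) ≠ 0 := by simpa using hi
  have hμK : μ = algebraMap K K' ((b.repr (f m0) i) / (b.repr m0 i)) := by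
    rw [map_div₀, eq_div_iff hb, key2, smul_eq_mul]
  refine ⟨(b.repr (f m0) i) / (b.repr m0 i), fun x => ?_⟩
  have : (1 : K') ⊗ₜ[K] (f x) = (1 : K') ⊗ₜ[K] (((b.repr (f m0) i) / (b.repr m0 i)) • x) := by
    have h1 : (1 : K') ⊗ₜ[K] (f x) = μ • ((1 : K') ⊗ₜ[K] x) := by
      have := hall ((1 : K') ⊗ₜ[K] x)
      rw [← this, hf', LinearMap.baseChange_tmul]
    rw [h1, hμK, TensorProduct.tmul_smul, algebraMap_smul]
  have := sub_eq_zero.mpr this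
  rw [← TensorProduct.tmul_sub] at this
  have := (one_tmul_eq_zero_iff K' _).mp this
  exact sub_eq_zero.mp this

/-- Schur: a nonzero equivariant map between irreducible representations is an isomorphism. -/
lemma schur_equiv (τ : Representation K G₀ M) (τ' : Representation K G₀ N)
    (hM : RepIrreducible τ) (hN : RepIrreducible τ') (f : M →ₗ[K] N)
    (hf : ∀ g x, f (τ g x) = τ' g (f x)) (hne : f ≠ 0) : RepEquiv τ τ' := by
  have hker : LinearMap.ker f = ⊥ := by
    rcases hM.2 (LinearMap.ker f) (fun g x hx => by
      rw [LinearMap.mem_ker] at hx ⊢; rw [hf, hx, map_zero]) with h | h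
    · exact h
    · exact absurd (LinearMap.ker_eq_top.mp h) hne
  have hrange : LinearMap.range f = ⊤ := by
    rcases hN.2 (LinearMap.range f) (fun g y hy => by
      obtain ⟨x, rfl⟩ := hy; exact ⟨τ g x, hf g x⟩) with h | h
    · exact absurd (LinearMap.range_eq_bot.mp h) hne
    · exact h
  refine ⟨LinearEquiv.ofBijective f ⟨LinearMap.ker_eq_bot.mp hker,
    LinearMap.range_eq_top.mp hrange⟩, fun g x => hf g x⟩

end AuxRep2
noncomputable section AuxRep3

open scoped TensorProduct

variable {K : Type*} [Field K] {G₀ : Type*} [Group G₀]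
  {M : Type*} [AddCommGroup M] [Module K M]

/-- Maschke's theorem: an invariant subspace of an invariant subspace has an invariant
complement, provided the order of the group is invertible. -/
lemma maschke_rel [Fintype G₀] (τ : Representation K G₀ M)
    (hcard : (Fintype.card G₀ : K) ≠ 0)
    {A B : Submodule K M} (hA : RepInvariant τ A) (hB : RepInvariant τ B) (hAB : A ≤ B) :
    ∃ C : Submodule K M, RepInvariant τ C ∧ C ≤ B ∧ A ⊓ C = ⊥ ∧ A ⊔ C = B := by
  obtain ⟨D, hD⟩ := A.exists_isCompl
  set π : M →ₗ[K] M := A.subtype ∘ₗ A.linearProjOfIsCompl D hD with hπ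
  have hπA : ∀ x, π x ∈ A := fun x => (A.linearProjOfIsCompl D hD x).2
  have hπid : ∀ a ∈ A, π a = a := by
    intro a ha
    calc π a = ((A.projectionOnto D hD) ((⟨a, ha⟩ : A) : M) : M) := rfl
      _ = ((⟨a, ha⟩ : A) : M) := by rw [Submodule.projectionOnto_apply_left hD]
      _ = a := rfl
  set φ : M →ₗ[K] M :=
    (Fintype.card G₀ : K)⁻¹ • ∑ g : G₀, (τ g) ∘ₗ π ∘ₗ (τ g⁻¹) with hφ
  have hφA : ∀ x, φ x ∈ A := by
    intro x
    rw [hφ]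
    simp only [LinearMap.smul_apply, LinearMap.sum_apply, LinearMap.comp_apply]
    exact Submodule.smul_mem _ _ (Submodule.sum_mem _ fun g _ => hA g _ (hπA _))
  have hτcancel : ∀ (g : G₀) (x : M), τ g (τ g⁻¹ x) = x := by
    intro g x
    have : (τ g) * (τ g⁻¹) = 1 := by rw [← map_mul, mul_inv_cancel, map_one]
    calc τ g (τ g⁻¹ x) = ((τ g) * (τ g⁻¹)) x := rfl
      _ = x := by rw [this]; rfl
  have hφid : ∀ a ∈ A, φ a = a := by
    intro a ha
    rw [hφ]
    simp only [LinearMap.smul_apply, LinearMap.sum_apply, LinearMap.comp_apply]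
    have : ∀ g : G₀, τ g (π (τ g⁻¹ a)) = a := by
      intro g
      rw [hπid _ (hA g⁻¹ a ha), hτcancel]
    rw [Finset.sum_congr rfl fun g _ => this g, Finset.sum_const, Finset.card_univ,
      ← Nat.cast_smul_eq_nsmul K, ← smul_assoc, smul_eq_mul, inv_mul_cancel₀ hcard, one_smul]
  have hφequi : ∀ (h : G₀) (x : M), φ (τ h x) = τ h (φ x) := by
    intro h x
    rw [hφ]
    simp only [LinearMap.smul_apply, LinearMap.sum_apply, LinearMap.comp_apply, map_smul]
    congr 1
    rw [map_sum]
    refine (Fintype.sum_equiv (Equiv.mulLeft h)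
      (fun g => τ h (τ g (π (τ g⁻¹ x)))) (fun g => τ g (π (τ g⁻¹ (τ h x)))) fun g => ?_).symm
    have e1 : τ (h * g)⁻¹ (τ h x) = τ g⁻¹ x := by
      calc τ (h * g)⁻¹ (τ h x) = ((τ (h*g)⁻¹) * (τ h)) x := rfl
        _ = τ ((h*g)⁻¹ * h) x := by rw [← map_mul]
        _ = τ g⁻¹ x := by rw [mul_inv_rev, inv_mul_cancel_right]
    show τ h (τ g (π (τ g⁻¹ x))) = τ (h * g) (π (τ (h * g)⁻¹ (τ h x)))
    rw [e1]
    calc τ h (τ g (π (τ g⁻¹ x))) = ((τ h) * (τ g)) (π (τ g⁻¹ x)) := rfl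
      _ = τ (h * g) (π (τ g⁻¹ x)) := by rw [map_mul]
  refine ⟨B ⊓ LinearMap.ker φ, ?_, inf_le_left, ?_, ?_⟩
  · intro g x hx
    obtain ⟨hxB, hxk⟩ := Submodule.mem_inf.mp hx
    refine Submodule.mem_inf.mpr ⟨hB g x hxB, LinearMap.mem_ker.mpr ?_⟩
    rw [hφequi, LinearMap.mem_ker.mp hxk, map_zero]
  · rw [eq_bot_iff]
    intro x hx
    obtain ⟨hxA, hxBk⟩ := Submodule.mem_inf.mp hx
    obtain ⟨hxB, hxk⟩ := Submodule.mem_inf.mp hxBk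
    rw [Submodule.mem_bot, ← hφid x hxA, LinearMap.mem_ker.mp hxk]
  · apply le_antisymm
    · exact sup_le hAB inf_le_left
    · intro x hx
      have h1 : φ x ∈ A := hφA x
      have h2 : x - φ x ∈ B ⊓ LinearMap.ker φ := by
        refine Submodule.mem_inf.mpr ⟨Submodule.sub_mem _ hx (hAB h1), LinearMap.mem_ker.mpr ?_⟩
        rw [map_sub, hφid _ h1, sub_self]
      have : x = φ x + (x - φ x) := by abel
      rw [this]
      exact Submodule.add_mem _ (Submodule.mem_sup_left h1) (Submodule.mem_sup_right h2)

/-- Every invariant subspace is contained in (in fact equal to) the supremum of the minimal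
nonzero invariant subspaces it contains. -/
lemma le_sSup_minimal [Fintype G₀] [FiniteDimensional K M] (τ : Representation K G₀ M)
    (hcard : (Fintype.card G₀ : K) ≠ 0) (U : Submodule K M) (hU : RepInvariant τ U) :
    U ≤ sSup {S : Submodule K M | S ≤ U ∧ RepInvariant τ S ∧ S ≠ ⊥ ∧
      ∀ S' ≤ S, RepInvariant τ S' → S' = ⊥ ∨ S' = S} := by
  generalize hn : Module.finrank K U = n
  induction n using Nat.strong_induction_on generalizing U with
  | _ n IH =>
    by_cases hUbot : U = ⊥
    · rw [hUbot]; exact bot_le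
    -- find a minimal invariant subspace of U
    have hne : ∃ k, ∃ S : Submodule K M, S ≤ U ∧ RepInvariant τ S ∧ S ≠ ⊥ ∧
        Module.finrank K S = k := ⟨Module.finrank K U, U, le_rfl, hU, hUbot, rfl⟩
    obtain ⟨S, hSU, hSinv, hSne, hSrank⟩ := Nat.sInf_mem hne
    have hSmin : ∀ S' ≤ S, RepInvariant τ S' → S' = ⊥ ∨ S' = S := by
      intro S' hS'S hS'inv
      by_cases hS'bot : S' = ⊥
      · exact Or.inl hS'bot
      · right
        have h1 : Module.finrank K S' ∈ {k | ∃ S : Submodule K M, S ≤ U ∧ RepInvariant τ S ∧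
            S ≠ ⊥ ∧ Module.finrank K S = k} := ⟨S', hS'S.trans hSU, hS'inv, hS'bot, rfl⟩
        have h2 : Module.finrank K S ≤ Module.finrank K S' := hSrank ▸ Nat.sInf_le h1
        have h3 : Module.finrank K S' ≤ Module.finrank K S :=
          Submodule.finrank_mono hS'S
        exact Submodule.eq_of_le_of_finrank_eq hS'S (le_antisymm h3 h2)
    obtain ⟨C, hCinv, hCU, hSC, hSCsup⟩ := maschke_rel τ hcard hSinv hU hSU
    have hCltU : C < U := by
      refine lt_of_le_of_ne hCU ?_
      rintro rfl
      apply hSne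
      rw [← hSC]
      exact (inf_eq_left.mpr hSU).symm
    have hrank : Module.finrank K C < n := hn ▸ Submodule.finrank_lt_finrank_of_lt hCltU
    have hCle := IH _ hrank C hCinv rfl
    have hSle : S ∈ {S : Submodule K M | S ≤ U ∧ RepInvariant τ S ∧ S ≠ ⊥ ∧
        ∀ S' ≤ S, RepInvariant τ S' → S' = ⊥ ∨ S' = S} := ⟨hSU, hSinv, hSne, hSmin⟩
    have hfin : S ⊔ C ≤ sSup {S : Submodule K M | S ≤ U ∧ RepInvariant τ S ∧ S ≠ ⊥ ∧
        ∀ S' ≤ S, RepInvariant τ S' → S' = ⊥ ∨ S' = S} := by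
      refine sup_le (le_sSup hSle) (hCle.trans (sSup_le_sSup ?_))
      rintro T ⟨hTC, hTinv, hTne, hTmin⟩
      exact ⟨hTC.trans hCU, hTinv, hTne, hTmin⟩
    exact le_trans (le_of_eq hSCsup.symm) hfin

end AuxRep3
noncomputable section AuxRep4

open scoped TensorProduct

variable {K : Type*} [Field K] {G₀ : Type*} [Group G₀]
  {M : Type*} [AddCommGroup M] [Module K M]

/-- Transfer irreducibility of a subrepresentation to ambient invariant subspaces. -/
lemma repSub_irreducible_eq_bot_or_eq (τ : Representation K G₀ M) {P : Submodule K M}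
    (hP : RepInvariant τ P) (hirr : RepIrreducible (repSub τ P hP))
    {T : Submodule K M} (hTP : T ≤ P) (hT : RepInvariant τ T) : T = ⊥ ∨ T = P := by
  have h1 : RepInvariant (repSub τ P hP) (T.comap P.subtype) := by
    intro g x hx
    simp only [Submodule.mem_comap] at hx ⊢
    have : ((repSub τ P hP g x : P) : M) = τ g (x : M) := rfl
    show ((repSub τ P hP g x : P) : M) ∈ T
    rw [this]
    exact hT g _ hx
  have hmapback : Submodule.map P.subtype (T.comap P.subtype) = T := by
    rw [Submodule.map_comap_subtype, inf_eq_right.mpr hTP]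
  rcases hirr.2 _ h1 with h | h
  · left; rw [← hmapback, h, Submodule.map_bot]
  · right; rw [← hmapback, h, Submodule.map_top, Submodule.range_subtype]

end AuxRep4
end

open scoped TensorProduct

/-- If `E = ⊕ᵢ Eᵢ` is a multiplicity-free `K[G]`-module and `F` is a
finite-dimensional `K[H]`-module, then every `K[G×H]`-submodule `U` of `E ⊗ F` has the form
`U = ⊕ᵢ Eᵢ ⊗ Fᵢ` for suitable `K[H]`-submodules `Fᵢ` of `F`. -/
theorem statement_14 {K : Type*} [Field K] {G H : Type*} [Group G] [Group H]
    [Fintype G] [Fintype H]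
    {V W : Type*} [AddCommGroup V] [Module K V] [FiniteDimensional K V]
    [AddCommGroup W] [Module K W] [FiniteDimensional K W]
    (hchar : ringChar K = 0 ∨
      (Nat.Coprime (ringChar K) (Fintype.card G) ∧
        Nat.Coprime (ringChar K) (Fintype.card H)))
    (ρ : Representation K G V) (σ : Representation K H W)
    (r : ℕ) (p : Fin r → Submodule K V) (hinv : ∀ i, RepInvariant ρ (p i))
    (habs : ∀ i, RepAbsIrreducible (repSub ρ (p i) (hinv i)))
    (hnoniso : ∀ i j, i ≠ j →
      ¬ RepEquiv (repSub ρ (p i) (hinv i)) (repSub ρ (p j) (hinv j)))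
    (hindep : iSupIndep p) (hsup : (⨆ i, p i) = ⊤)
    (U : Submodule K (TensorProduct K V W)) (hU : RepInvariant (repProdTensor ρ σ) U) :
    ∃ q : Fin r → Submodule K W, (∀ i, RepInvariant σ (q i)) ∧
      U = ⨆ i, LinearMap.range (TensorProduct.map (p i).subtype (q i).subtype) := by
  classical
  -- the order of G is invertible in K
  have hcardG : (Fintype.card G : K) ≠ 0 := by
    have hchG : ringChar K = 0 ∨ Nat.Coprime (ringChar K) (Fintype.card G) := by
      rcases hchar with h | ⟨h, -⟩
      · exact Or.inl h
      · exact Or.inr h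
    rcases hchG with h0 | hcop
    · have : CharP K 0 := h0 ▸ ringChar.charP K
      have : CharZero K := CharP.charP_to_charZero K
      exact Nat.cast_ne_zero.mpr Fintype.card_ne_zero
    · intro hzero
      have hdvd : ringChar K ∣ Fintype.card G :=
        (CharP.cast_eq_zero_iff K (ringChar K) _).mp hzero
      have h1 : ringChar K = 1 := Nat.Coprime.eq_one_of_dvd hcop hdvd
      have : (1 : K) = 0 := by
        rw [← Nat.cast_one, ← h1]
        exact CharP.cast_eq_zero K (ringChar K)
      exact one_ne_zero this
  -- the candidate subspaces of W
  set q : Fin r → Submodule K W := fun i =>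
    { carrier := {w | ∀ v ∈ p i, v ⊗ₜ[K] w ∈ U}
      add_mem' := fun {a b} ha hb v hv => by
        rw [TensorProduct.tmul_add]; exact U.add_mem (ha v hv) (hb v hv)
      zero_mem' := fun v hv => by rw [TensorProduct.tmul_zero]; exact U.zero_mem
      smul_mem' := fun c {w} hw v hv => by
        rw [TensorProduct.tmul_smul]; exact U.smul_mem c (hw v hv) } with hq
  have hqmem : ∀ (i) (w : W), w ∈ q i ↔ ∀ v ∈ p i, v ⊗ₜ[K] w ∈ U := fun _ _ => Iff.rfl
  -- the q i are σ-invariant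
  have hqinv : ∀ i, RepInvariant σ (q i) := by
    intro i h w hw v hv
    have h1 : (repProdTensor ρ σ) (1, h) (v ⊗ₜ[K] w) = v ⊗ₜ[K] (σ h w) := by
      show TensorProduct.map (ρ 1) (σ h) (v ⊗ₜ[K] w) = v ⊗ₜ[K] (σ h w)
      rw [TensorProduct.map_tmul, map_one, Module.End.one_apply]
    rw [← h1]
    exact hU (1, h) _ (hw v hv)
  -- the supremum is contained in U
  have hsup2 : (⨆ i, LinearMap.range (TensorProduct.map (p i).subtype (q i).subtype)) ≤ U := by
    refine iSup_le fun i => ?_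
    rintro - ⟨t, rfl⟩
    induction t with
    | zero => simp
    | tmul a c =>
        rw [TensorProduct.map_tmul]
        exact c.2 a.1 a.2
    | add y z hy hz => rw [map_add]; exact U.add_mem hy hz
  -- the restricted action of G on V ⊗ W
  set ρW : Representation K G (V ⊗[K] W) := (repProdTensor ρ σ).comp (MonoidHom.inl G H)
    with hρW
  have hρWt : ∀ (g : G) (v : V) (w : W), ρW g (v ⊗ₜ[K] w) = (ρ g v) ⊗ₜ[K] w := by
    intro g v w
    show TensorProduct.map (ρ g) (σ 1) (v ⊗ₜ[K] w) = (ρ g v) ⊗ₜ[K] w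
    rw [TensorProduct.map_tmul, map_one, Module.End.one_apply]
  have hUinvW : RepInvariant ρW U := fun g x hx => hU (g, 1) x hx
  -- projections onto the p i
  have hcompl : ∀ i, IsCompl (p i) (⨆ j, ⨆ _ : j ≠ i, p j) := by
    intro i
    refine ⟨hindep i, codisjoint_iff.mpr (le_antisymm le_top ?_)⟩
    rw [← hsup]
    refine iSup_le fun j => ?_
    by_cases h : j = i
    · exact h ▸ le_sup_left
    · exact le_trans (le_iSup₂ (f := fun j _ => p j) j h) le_sup_right
  set P : Fin r → (V →ₗ[K] V) := fun i =>
    (p i).subtype ∘ₗ Submodule.linearProjOfIsCompl _ _ (hcompl i) with hP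
  have hPmem : ∀ i v, P i v ∈ p i := fun i v =>
    ((Submodule.linearProjOfIsCompl _ _ (hcompl i)) v).2
  have hPid : ∀ i, ∀ v ∈ p i, P i v = v := by
    intro i v hv
    calc P i v = ((Submodule.projectionOnto _ _ (hcompl i))
          ((⟨v, hv⟩ : p i) : V) : V) := rfl
      _ = ((⟨v, hv⟩ : p i) : V) := by
          rw [Submodule.projectionOnto_apply_left (hcompl i)]
      _ = v := rfl
  have hPzero : ∀ i j, j ≠ i → ∀ v ∈ p j, P i v = 0 := by
    intro i j hij v hv
    have hv' : v ∈ (⨆ j, ⨆ _ : j ≠ i, p j) := le_iSup₂ (f := fun j _ => p j) j hij hv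
    calc P i v = ((Submodule.projectionOnto _ _ (hcompl i))
          ((⟨v, hv'⟩ : ↥(⨆ j, ⨆ _ : j ≠ i, p j)) : V) : V) := rfl
      _ = ((0 : p i) : V) := by
          rw [Submodule.projectionOnto_apply_right (hcompl i)]
      _ = 0 := rfl
  have hPsum : ∀ v : V, ∑ i, P i v = v := by
    intro v
    have hv : v ∈ ⨆ i, p i := hsup ▸ Submodule.mem_top
    refine Submodule.iSup_induction (motive := fun v => ∑ i, P i v = v) p hv ?_ (by simp) ?_
    · intro j x hx
      rw [Finset.sum_eq_single j (fun i _ hij => hPzero i j (Ne.symm hij) x hx)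
        (fun h => absurd (Finset.mem_univ j) h)]
      exact hPid j x hx
    · intro x y hx hy
      simp only [map_add, Finset.sum_add_distrib]
      rw [hx, hy]
  have hPequi : ∀ i (g : G) (v : V), P i (ρ g v) = ρ g (P i v) := by
    intro i g v
    have hv : v ∈ ⨆ i, p i := hsup ▸ Submodule.mem_top
    refine Submodule.iSup_induction (motive := fun v => P i (ρ g v) = ρ g (P i v)) p hv ?_
      (by simp) ?_
    · intro j x hx
      by_cases h : j = i
      · subst h
        rw [hPid j _ (hinv j g x hx), hPid j x hx]
      · rw [hPzero i j h _ (hinv j g x hx), hPzero i j h x hx, map_zero]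
    · intro x y hx hy
      simp only [map_add]
      rw [hx, hy]

  -- coordinates on W
  set n := Module.finrank K W with hn
  set b : Module.Basis (Fin n) K W := Module.finBasis K W with hb
  set c : Fin n → (V ⊗[K] W →ₗ[K] V) := fun k =>
    (TensorProduct.rid K V).toLinearMap ∘ₗ TensorProduct.map LinearMap.id (b.coord k) with hc
  have hct : ∀ (k) (v : V) (w : W), c k (v ⊗ₜ[K] w) = b.repr w k • v := by
    intro k v w
    simp [hc, TensorProduct.rid_tmul, Module.Basis.coord_apply]
  have hcsum : ∀ x : V ⊗[K] W, ∑ k, (c k x) ⊗ₜ[K] (b k) = x := by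
    intro x
    have hL : (∑ k, ((TensorProduct.mk K V W).flip (b k)) ∘ₗ c k) =
        (LinearMap.id : V ⊗[K] W →ₗ[K] V ⊗[K] W) := by
      apply TensorProduct.ext'
      intro v w
      simp only [LinearMap.sum_apply, LinearMap.comp_apply, LinearMap.id_apply]
      have h1 : ∀ k, (TensorProduct.mk K V W).flip (b k) (c k (v ⊗ₜ[K] w)) =
          b.repr w k • (v ⊗ₜ[K] (b k)) := by
        intro k
        rw [hct]
        simp [TensorProduct.smul_tmul']
      rw [Finset.sum_congr rfl fun k _ => h1 k]
      calc ∑ k, b.repr w k • (v ⊗ₜ[K] b k) = ∑ k, v ⊗ₜ[K] (b.repr w k • b k) := by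
            refine Finset.sum_congr rfl fun k _ => ?_
            rw [TensorProduct.tmul_smul]
          _ = v ⊗ₜ[K] (∑ k, b.repr w k • b k) := by rw [TensorProduct.tmul_sum]
          _ = v ⊗ₜ[K] w := by rw [Module.Basis.sum_repr]
    have h2 := LinearMap.congr_fun hL x
    simpa only [LinearMap.sum_apply, LinearMap.comp_apply, LinearMap.flip_apply,
      TensorProduct.mk_apply, LinearMap.id_apply] using h2
  have hcequi : ∀ (k) (g : G) (x : V ⊗[K] W), c k (ρW g x) = ρ g (c k x) := by
    intro k g x
    induction x with
    | zero => simp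
    | tmul v w => rw [hρWt, hct, hct, map_smul]
    | add y z hy hz => simp only [map_add, hy, hz]
  -- reduce to minimal invariant subspaces of U
  refine ⟨q, hqinv, le_antisymm ?_ hsup2⟩
  have hdec := le_sSup_minimal ρW hcardG U hUinvW
  refine le_trans hdec (sSup_le ?_)
  rintro S ⟨hSU, hSinv, hSne, hSmin⟩
  -- find a component where S is visible
  have hex : ∃ s ∈ S, ∃ i0 k0, P i0 (c k0 s) ≠ 0 := by
    by_contra hall
    push_neg at hall
    apply hSne
    rw [eq_bot_iff]
    intro s hs
    have h1 : ∀ k, c k s = 0 := by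
      intro k
      have h2 := hPsum (c k s)
      rw [Finset.sum_congr rfl (fun i _ => hall s hs i k)] at h2
      simpa using h2.symm
    have h3 := hcsum s
    rw [Finset.sum_congr rfl (fun k _ => by
      rw [h1 k, TensorProduct.zero_tmul])] at h3
    simpa using h3.symm
  obtain ⟨s0, hs0S, i0, k0, hs0ne⟩ := hex
  set A : V ⊗[K] W →ₗ[K] V := (P i0) ∘ₗ (c k0) with hA
  have hAequi : ∀ (g : G) (x : V ⊗[K] W), A (ρW g x) = ρ g (A x) := fun g x => by
    show P i0 (c k0 (ρW g x)) = ρ g (P i0 (c k0 x))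
    rw [hcequi, hPequi]
  have hAmem : ∀ x, A x ∈ p i0 := fun x => hPmem i0 _
  -- the image of S is all of p i0
  have hT : Submodule.map A S = p i0 := by
    have hTle : Submodule.map A S ≤ p i0 := by
      rintro - ⟨s, hs, rfl⟩; exact hAmem s
    have hTinv : RepInvariant ρ (Submodule.map A S) := by
      rintro g - ⟨s, hs, rfl⟩
      exact ⟨ρW g s, hSinv g s hs, hAequi g s⟩
    rcases repSub_irreducible_eq_bot_or_eq ρ (hinv i0)
      (RepAbsIrreducible.repIrreducible _ (habs i0)) hTle hTinv with h | h
    · exfalso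
      apply hs0ne
      have h4 : A s0 ∈ (⊥ : Submodule K V) := h ▸ Submodule.mem_map_of_mem hs0S
      exact (Submodule.mem_bot K).mp h4
    · exact h
  -- A is injective on S
  have hkerS : ∀ s ∈ S, A s = 0 → s = 0 := by
    intro s hs hAs
    have hiv : RepInvariant ρW (S ⊓ LinearMap.ker A) := by
      intro g x hx
      obtain ⟨hx1, hx2⟩ := Submodule.mem_inf.mp hx
      exact Submodule.mem_inf.mpr ⟨hSinv g x hx1,
        LinearMap.mem_ker.mpr (by rw [hAequi, LinearMap.mem_ker.mp hx2, map_zero])⟩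
    rcases hSmin _ inf_le_left hiv with h | h
    · have h5 : s ∈ S ⊓ LinearMap.ker A :=
        Submodule.mem_inf.mpr ⟨hs, LinearMap.mem_ker.mpr hAs⟩
      rw [h] at h5; simpa using h5
    · exfalso
      apply hs0ne
      have h6 : s0 ∈ S ⊓ LinearMap.ker A := h.symm ▸ hs0S
      exact LinearMap.mem_ker.mp (Submodule.mem_inf.mp h6).2
  -- equivariant maps S → p j from components
  set τS := repSub ρW S hSinv with hτS
  set τ0 := repSub ρ (p i0) (hinv i0) with hτ0
  have hmk : ∀ (j : Fin r) (k : Fin n), ∃ fjk : ↥S →ₗ[K] ↥(p j),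
      (∀ s : ↥S, (fjk s : V) = P j (c k (s : V ⊗[K] W))) ∧
      (∀ (g : G) (x : ↥S), fjk (τS g x) = (repSub ρ (p j) (hinv j)) g (fjk x)) := by
    intro j k
    refine ⟨(((P j) ∘ₗ (c k)).domRestrict S).codRestrict (p j) (fun x => hPmem j _),
      fun s => rfl, ?_⟩
    intro g x
    apply Subtype.ext
    show P j (c k ((τS g x : ↥S) : V ⊗[K] W)) = ρ g (P j (c k (x : V ⊗[K] W)))
    have h1 : ((τS g x : ↥S) : V ⊗[K] W) = ρW g (x : V ⊗[K] W) := rfl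
    rw [h1, hcequi, hPequi]
  -- the isomorphism S ≃ p i0
  obtain ⟨f0, hf0c, hf0equi⟩ := hmk i0 k0
  have hf0bij : Function.Bijective f0 := by
    constructor
    · intro x y hxy
      have h1 : A ((x : V ⊗[K] W) - (y : V ⊗[K] W)) = 0 := by
        rw [map_sub]
        have h2 : (f0 x : V) = (f0 y : V) := by rw [hxy]
        rw [hf0c, hf0c] at h2
        show P i0 (c k0 ((x : V ⊗[K] W))) - P i0 (c k0 ((y : V ⊗[K] W))) = 0
        rw [h2, sub_self]
      have h3 := hkerS _ (Submodule.sub_mem S x.2 y.2) h1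
      exact Subtype.ext (sub_eq_zero.mp h3)
    · intro v
      have h4 : (v : V) ∈ Submodule.map A S := by rw [hT]; exact v.2
      obtain ⟨s, hs, hsv⟩ := h4
      refine ⟨⟨s, hs⟩, Subtype.ext ?_⟩
      rw [hf0c]
      exact hsv
  set e0 := LinearEquiv.ofBijective f0 hf0bij with he0
  have he0ap : ∀ x : ↥S, e0 x = f0 x := fun x => rfl
  have hfe : ∀ z : ↥(p i0), f0 (e0.symm z) = z := by
    intro z
    rw [← he0ap]
    exact e0.apply_symm_apply z
  have hef : ∀ x : ↥S, e0.symm (f0 x) = x := by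
    intro x
    rw [← he0ap]
    exact e0.symm_apply_apply x
  have hsymmEqui : ∀ (g : G) (y : ↥(p i0)), e0.symm (τ0 g y) = τS g (e0.symm y) := by
    intro g y
    apply hf0bij.injective
    rw [hf0equi g (e0.symm y), hfe, hfe]
  -- scalar relations
  have hscal : ∀ k : Fin n, ∃ lam : K, ∀ s, s ∈ S → P i0 (c k s) = lam • (A s) := by
    intro k
    obtain ⟨fk, hfkc, hfkequi⟩ := hmk i0 k
    set φ : ↥(p i0) →ₗ[K] ↥(p i0) := fk ∘ₗ (e0.symm : ↥(p i0) ≃ₗ[K] ↥S).toLinearMap with hφ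
    have hφequi : ∀ (g : G) (y : ↥(p i0)), φ (τ0 g y) = τ0 g (φ y) := by
      intro g y
      show fk (e0.symm (τ0 g y)) = τ0 g (fk (e0.symm y))
      rw [hsymmEqui, hfkequi]
    obtain ⟨lam, hlam⟩ := schur_scalar τ0 (habs i0) φ hφequi
    refine ⟨lam, fun s hs => ?_⟩
    have h1 : φ (f0 ⟨s, hs⟩) = lam • (f0 ⟨s, hs⟩) := hlam _
    have h2 : φ (f0 ⟨s, hs⟩) = fk ⟨s, hs⟩ := by
      show fk (e0.symm (f0 ⟨s, hs⟩)) = fk ⟨s, hs⟩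
      rw [hef]
    rw [h2] at h1
    have h3 := congrArg (Subtype.val) h1
    rw [hfkc] at h3
    rw [h3]
    have h4 : ((lam • f0 ⟨s, hs⟩ : ↥(p i0)) : V) = lam • ((f0 ⟨s, hs⟩ : ↥(p i0)) : V) := rfl
    rw [h4, hf0c]
    rfl
  have hzero : ∀ j, j ≠ i0 → ∀ k, ∀ s, s ∈ S → P j (c k s) = 0 := by
    intro j hj k s hs
    obtain ⟨gk, hgkc, hgkequi⟩ := hmk j k
    set ψ : ↥(p i0) →ₗ[K] ↥(p j) := gk ∘ₗ (e0.symm : ↥(p i0) ≃ₗ[K] ↥S).toLinearMap with hψ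
    have hψequi : ∀ (g : G) (y : ↥(p i0)), ψ (τ0 g y) = (repSub ρ (p j) (hinv j)) g (ψ y) := by
      intro g y
      show gk (e0.symm (τ0 g y)) = (repSub ρ (p j) (hinv j)) g (gk (e0.symm y))
      rw [hsymmEqui, hgkequi]
    have hψ0 : ψ = 0 := by
      by_contra hne
      exact hnoniso i0 j (Ne.symm hj) (schur_equiv τ0 _
        (RepAbsIrreducible.repIrreducible _ (habs i0))
        (RepAbsIrreducible.repIrreducible _ (habs j)) ψ hψequi hne)
    have h1 : gk ⟨s, hs⟩ = ψ (f0 ⟨s, hs⟩) := by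
      show gk ⟨s, hs⟩ = gk (e0.symm (f0 ⟨s, hs⟩))
      rw [hef]
    rw [hψ0] at h1
    have h2 := congrArg (Subtype.val) h1
    rw [hgkc] at h2
    simpa using h2
  choose lam hlam using hscal
  set w0 : W := ∑ k, lam k • b k with hw0
  have hstruct : ∀ s ∈ S, s = (A s) ⊗ₜ[K] w0 := by
    intro s hs
    have h1 : ∀ k, c k s = lam k • (A s) := by
      intro k
      have h2 := hPsum (c k s)
      rw [Finset.sum_eq_single i0 (fun j _ hj => hzero j hj k s hs)
        (fun h => absurd (Finset.mem_univ i0) h)] at h2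
      exact h2.symm.trans (hlam k s hs)
    conv_lhs => rw [← hcsum s]
    rw [Finset.sum_congr rfl fun k _ => by rw [h1 k]]
    rw [hw0, TensorProduct.tmul_sum]
    refine Finset.sum_congr rfl fun k _ => ?_
    rw [TensorProduct.smul_tmul]
  have hw0q : w0 ∈ q i0 := by
    intro v hv
    have h1 : v ∈ Submodule.map A S := by rw [hT]; exact hv
    obtain ⟨s, hs, rfl⟩ := h1
    rw [← hstruct s hs]
    exact hSU hs
  intro s hs
  refine Submodule.mem_iSup_of_mem i0 ?_
  refine ⟨(⟨A s, hAmem s⟩ : ↥(p i0)) ⊗ₜ[K] (⟨w0, hw0q⟩ : ↥(q i0)), ?_⟩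
  rw [TensorProduct.map_tmul]
  exact (hstruct s hs).symm
end

section
/- Let G and H be finite groups and K a field whose characteristic is either zero or coprime to both |G| and |H|. If E' is an absolutely irreducible finite-dimensional K[G]-module and F' is an irreducible finite-dimensional K[H]-module, then E' ⊗_K F', regarded as a K[G×H]-module via (g,h)·(x ⊗ y) = gx ⊗ hy, is irreducible. -/
/-! ### Auxiliary lemmas -/

noncomputable section AuxLemmas

open scoped TensorProduct

section Schur
variable {K : Type*} [Field K] {G₀ : Type*} [Group G₀]
  {V : Type*} [AddCommGroup V] [Module K V]

lemma nontrivial_of_absIrr (ρ : Representation K G₀ V) (hρ : RepAbsIrreducible ρ) :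
    Nontrivial V := by
  by_contra h
  rw [not_nontrivial_iff_subsingleton] at h
  obtain ⟨x, y, hxy⟩ := hρ.1
  apply hxy
  have : ∀ z : (AlgebraicClosure K) ⊗[K] V, z = 0 := by
    intro z
    induction z using TensorProduct.induction_on with
    | zero => rfl
    | tmul a v => rw [Subsingleton.elim v 0, TensorProduct.tmul_zero]
    | add x y hx hy => rw [hx, hy, add_zero]
  rw [this x, this y]

lemma exists_dual_pair (hV : Nontrivial V) :
    ∃ (v₀ : V) (f₀ : Module.Dual K V), f₀ v₀ = 1 ∧ v₀ ≠ 0 := by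
  obtain ⟨v₀, hv₀⟩ := exists_ne (0 : V)
  obtain ⟨f₀', hf₀'⟩ : ∃ f : Module.Dual K V, f v₀ ≠ 0 := by
    by_contra h
    push_neg at h
    exact hv₀ ((Module.forall_dual_apply_eq_zero_iff K v₀).mp h)
  exact ⟨v₀, (f₀' v₀)⁻¹ • f₀', by simp [inv_mul_cancel₀ hf₀'], hv₀⟩

lemma schur_scalar_s15 [FiniteDimensional K V] (ρ : Representation K G₀ V)
    (hρ : RepAbsIrreducible ρ) (φ : V →ₗ[K] V)
    (hφ : ∀ g, φ ∘ₗ (ρ g : V →ₗ[K] V) = (ρ g : V →ₗ[K] V) ∘ₗ φ) :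
    ∃ c : K, ∀ v, φ v = c • v := by
  have hV : Nontrivial V := nontrivial_of_absIrr ρ hρ
  set Kb := AlgebraicClosure K
  have hnt : Nontrivial (Kb ⊗[K] V) := hρ.1
  set Φ : (Kb ⊗[K] V) →ₗ[Kb] (Kb ⊗[K] V) := LinearMap.baseChange Kb φ with hΦ
  obtain ⟨μ, hμ⟩ := Module.End.exists_eigenvalue Φ
  have hcomm : ∀ g, ∀ x : Kb ⊗[K] V, Φ (repBaseChange Kb ρ g x) = repBaseChange Kb ρ g (Φ x) := by
    intro g x
    have h1 : Φ ∘ₗ (repBaseChange Kb ρ g : (Kb ⊗[K] V) →ₗ[Kb] (Kb ⊗[K] V))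
        = (repBaseChange Kb ρ g : _ →ₗ[Kb] _) ∘ₗ Φ := by
      show LinearMap.baseChange Kb φ ∘ₗ LinearMap.baseChange Kb (ρ g)
          = LinearMap.baseChange Kb (ρ g) ∘ₗ LinearMap.baseChange Kb φ
      rw [← LinearMap.baseChange_comp, ← LinearMap.baseChange_comp, hφ]
    exact LinearMap.congr_fun h1 x
  have hinv : RepInvariant (repBaseChange Kb ρ) (Module.End.eigenspace Φ μ) := by
    intro g x hx
    rw [Module.End.mem_eigenspace_iff] at hx ⊢
    rw [hcomm g x, hx, map_smul]
  have htop : Module.End.eigenspace Φ μ = ⊤ := by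
    rcases hρ.2 _ hinv with h | h
    · exact absurd h hμ
    · exact h
  have hall : ∀ x : Kb ⊗[K] V, Φ x = μ • x := by
    intro x
    have : x ∈ Module.End.eigenspace Φ μ := htop ▸ Submodule.mem_top
    exact Module.End.mem_eigenspace_iff.mp this
  obtain ⟨v₀, f₀, hf₀, hv₀⟩ := exists_dual_pair (K := K) hV
  set ψ : Module.Dual K V → ((Kb ⊗[K] V) →ₗ[K] Kb) := fun f =>
    (TensorProduct.rid K Kb).toLinearMap ∘ₗ LinearMap.lTensor Kb f with hψ
  have hψ_tmul : ∀ f (a : Kb) (v : V), ψ f (a ⊗ₜ[K] v) = f v • a := by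
    intro f a v
    simp [hψ, TensorProduct.rid_tmul]
  have key : ∀ (f : Module.Dual K V) (v : V),
      algebraMap K Kb (f (φ v)) = f v • μ := by
    intro f v
    have h1 : Φ ((1 : Kb) ⊗ₜ[K] v) = μ • ((1 : Kb) ⊗ₜ[K] v) := hall _
    have h2 : (1 : Kb) ⊗ₜ[K] (φ v) = μ ⊗ₜ[K] v := by
      rw [hΦ] at h1
      rw [LinearMap.baseChange_tmul] at h1
      rw [h1, TensorProduct.smul_tmul', smul_eq_mul, mul_one]
    have := congrArg (ψ f) h2
    rw [hψ_tmul, hψ_tmul] at this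
    rw [Algebra.algebraMap_eq_smul_one, this]
  set c : K := f₀ (φ v₀) with hc
  have hμc : μ = algebraMap K Kb c := by
    have := key f₀ v₀
    rw [hf₀, one_smul] at this
    exact this.symm
  refine ⟨c, fun v => ?_⟩
  have : ∀ f : Module.Dual K V, f (φ v - c • v) = 0 := by
    intro f
    have h1 := key f v
    rw [hμc, Algebra.smul_def, ← map_mul] at h1
    have h2 : f (φ v) = f v * c := (algebraMap K Kb).injective h1
    rw [map_sub, map_smul, h2, smul_eq_mul, mul_comm, sub_self]
  have := (Module.forall_dual_apply_eq_zero_iff K (φ v - c • v)).mp this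
  rw [sub_eq_zero] at this
  exact this

end Schur

section Maschke
variable {K : Type*} [Field K] {G : Type*} [Group G] [Fintype G]
  {M : Type*} [AddCommGroup M] [Module K M]

lemma card_cast_ne_zero (h : ringChar K = 0 ∨ Nat.Coprime (ringChar K) (Fintype.card G)) :
    (Fintype.card G : K) ≠ 0 := by
  haveI : CharP K (ringChar K) := ringChar.charP K
  rw [Ne, CharP.cast_eq_zero_iff K (ringChar K)]
  intro hd
  rcases h with h | h
  · rw [h] at hd
    exact Fintype.card_pos.ne' (zero_dvd_iff.mp hd)
  · exact CharP.ringChar_ne_one (Nat.eq_one_of_dvd_one (h ▸ Nat.dvd_gcd dvd_rfl hd))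

lemma exists_equivariant_proj (hG : (Fintype.card G : K) ≠ 0)
    (τ : Representation K G M) (U : Submodule K M) (hU : RepInvariant τ U) :
    ∃ π : M →ₗ[K] M, LinearMap.range π = U ∧ ∀ g x, π (τ g x) = τ g (π x) := by
  obtain ⟨U', hcompl⟩ := Submodule.exists_isCompl U
  set π₀ : M →ₗ[K] M := U.subtype ∘ₗ Submodule.projectionOnto U U' hcompl with hπ₀
  have hπ₀mem : ∀ x, π₀ x ∈ U := fun x => (Submodule.projectionOnto U U' hcompl x).2
  have hπ₀fix : ∀ x ∈ U, π₀ x = x := by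
    intro x hx
    simp only [hπ₀, LinearMap.comp_apply, Submodule.subtype_apply]
    rw [show x = ((⟨x, hx⟩ : U) : M) from rfl, Submodule.projectionOnto_apply_left hcompl]
  set c : K := (Fintype.card G : K)⁻¹ with hc
  set π : M →ₗ[K] M := c • ∑ g : G, ((τ g : M →ₗ[K] M) ∘ₗ π₀ ∘ₗ (τ g⁻¹ : M →ₗ[K] M)) with hπ
  have hπ_apply : ∀ x, π x = c • ∑ g : G, τ g (π₀ (τ g⁻¹ x)) := by
    intro x
    simp [hπ, LinearMap.sum_apply]
  have hτinv : ∀ (g : G) (x : M), τ g⁻¹ (τ g x) = x := by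
    intro g x
    have : ((τ g⁻¹ * τ g : Module.End K M)) x = x := by
      rw [← map_mul, inv_mul_cancel, map_one, Module.End.one_apply]
    simpa [Module.End.mul_apply] using this
  refine ⟨π, ?_, ?_⟩
  · apply le_antisymm
    · rintro _ ⟨x, rfl⟩
      rw [hπ_apply]
      exact Submodule.smul_mem _ _ (Submodule.sum_mem _ fun g _ =>
        hU g _ (hπ₀mem _))
    · intro x hx
      have hfix : π x = x := by
        rw [hπ_apply]
        have : ∀ g : G, τ g (π₀ (τ g⁻¹ x)) = x := by
          intro g
          rw [hπ₀fix _ (hU g⁻¹ x hx)]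
          have := hτinv g⁻¹ x
          rwa [inv_inv] at this
        rw [Finset.sum_congr rfl fun g _ => this g, Finset.sum_const, Finset.card_univ,
          ← Nat.cast_smul_eq_nsmul K, smul_smul, hc, inv_mul_cancel₀ hG, one_smul]
      exact ⟨x, hfix⟩
  · intro h x
    rw [hπ_apply, hπ_apply, map_smul]
    congr 1
    rw [map_sum]
    refine (Fintype.sum_equiv (Equiv.mulLeft h)
      (fun g => τ h (τ g (π₀ (τ g⁻¹ x))))
      (fun g => τ g (π₀ (τ g⁻¹ (τ h x)))) fun g => ?_).symm
    have e1 : τ ((h * g)⁻¹) (τ h x) = τ g⁻¹ x := by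
      have : ∀ a b : G, τ a (τ b x) = τ (a * b) x := by
        intro a b
        rw [map_mul]; rfl
      rw [this, mul_inv_rev, inv_mul_cancel_right]
    have e2 : ∀ y, τ h (τ g y) = τ (h * g) y := by
      intro y; rw [map_mul]; rfl
    simp only [Equiv.coe_mulLeft]
    rw [e1, e2]

end Maschke

section Proj
variable {K : Type*} [Field K] {G : Type*} [Group G]
  {V : Type*} [AddCommGroup V] [Module K V] [FiniteDimensional K V]
  {W : Type*} [AddCommGroup W] [Module K W] [FiniteDimensional K W]

/-- Contraction in the `W`-variable by a dual vector. -/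
noncomputable def ctr (f : Module.Dual K W) : V ⊗[K] W →ₗ[K] V :=
  (TensorProduct.rid K V).toLinearMap ∘ₗ LinearMap.lTensor V f

omit [FiniteDimensional K V] [FiniteDimensional K W] in
@[simp] lemma ctr_tmul (f : Module.Dual K W) (v : V) (w : W) :
    ctr f (v ⊗ₜ[K] w) = f w • v := by
  simp [ctr, TensorProduct.rid_tmul]

omit [FiniteDimensional K V] [FiniteDimensional K W] in
lemma ctr_eq_of_forall {x y : V ⊗[K] W} (h : ∀ f : Module.Dual K W, ctr (V := V) f x = ctr f y) :
    x = y := by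
  classical
  set b := Module.Basis.ofVectorSpace K W
  set e := (TensorProduct.congr (LinearEquiv.refl K V) b.repr).trans
    (TensorProduct.finsuppScalarRight K K V _) with he
  have hcoord : ∀ (z : V ⊗[K] W) i, e z i = ctr (b.coord i) z := by
    intro z i
    induction z using TensorProduct.induction_on with
    | zero => simp
    | tmul v w =>
      simp [he, TensorProduct.congr_tmul, TensorProduct.finsuppScalarRight_apply_tmul_apply,
        Module.Basis.coord_apply]
    | add z₁ z₂ h₁ h₂ =>
      simp only [map_add, Finsupp.add_apply, h₁, h₂]
  apply e.injective
  ext i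
  rw [hcoord, hcoord, h]

/-- Contraction in the `V`-variable by a dual vector. -/
noncomputable def ctr' (f : Module.Dual K V) : V ⊗[K] W →ₗ[K] W :=
  (TensorProduct.lid K W).toLinearMap ∘ₗ LinearMap.rTensor W f

omit [FiniteDimensional K V] [FiniteDimensional K W] in
@[simp] lemma ctr'_tmul (f : Module.Dual K V) (v : V) (w : W) :
    ctr' f (v ⊗ₜ[K] w) = f v • w := by
  simp [ctr', TensorProduct.lid_tmul]

omit [FiniteDimensional K V] [FiniteDimensional K W] in
lemma ctr'_lTensor (f : Module.Dual K V) (q : W →ₗ[K] W) (x : V ⊗[K] W) :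
    ctr' f (LinearMap.lTensor V q x) = q (ctr' f x) := by
  induction x using TensorProduct.induction_on with
  | zero => simp
  | tmul v w => simp
  | add x₁ x₂ h₁ h₂ => simp only [map_add, h₁, h₂]

lemma proj_eq_lTensor (ρ : Representation K G V) (hρ : RepAbsIrreducible ρ)
    (π : V ⊗[K] W →ₗ[K] V ⊗[K] W)
    (hπ : ∀ g (x : V ⊗[K] W),
      π (TensorProduct.map (ρ g) LinearMap.id x) = TensorProduct.map (ρ g) LinearMap.id (π x)) :
    ∃ q : W →ₗ[K] W, π = LinearMap.lTensor V q := by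
  classical
  have hV : Nontrivial V := nontrivial_of_absIrr ρ hρ
  obtain ⟨v₀, f₀, hf₀, hv₀⟩ := exists_dual_pair (K := K) hV
  have hCg : ∀ (f : Module.Dual K W) (g : G) (y : V ⊗[K] W),
      ctr f (TensorProduct.map (ρ g) LinearMap.id y) = ρ g (ctr f y) := by
    intro f g y
    induction y using TensorProduct.induction_on with
    | zero => simp
    | tmul v w => simp [TensorProduct.map_tmul]
    | add y₁ y₂ h₁ h₂ => simp only [map_add, h₁, h₂]
  have schur : ∀ (f : Module.Dual K W) (w : W), ∃ c : K,
      ∀ v : V, ctr f (π (v ⊗ₜ[K] w)) = c • v := by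
    intro f w
    set E : V →ₗ[K] V :=
      ctr f ∘ₗ π ∘ₗ ((TensorProduct.mk K V W).flip w) with hE
    have hEapp : ∀ v, E v = ctr f (π (v ⊗ₜ[K] w)) := fun v => rfl
    have hEcomm : ∀ g, E ∘ₗ (ρ g : V →ₗ[K] V) = (ρ g : V →ₗ[K] V) ∘ₗ E := by
      intro g
      ext v
      simp only [LinearMap.comp_apply, hEapp]
      have h1 : (ρ g v) ⊗ₜ[K] w = TensorProduct.map (ρ g) LinearMap.id (v ⊗ₜ[K] w) := by
        simp [TensorProduct.map_tmul]
      rw [h1, hπ, hCg]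
    obtain ⟨c, hc⟩ := schur_scalar_s15 ρ hρ E hEcomm
    exact ⟨c, fun v => by rw [← hEapp, hc]⟩
  set B : W →ₗ[K] Module.Dual K (Module.Dual K W) :=
    LinearMap.mk₂ K (fun w f => f₀ (ctr f (π (v₀ ⊗ₜ[K] w))))
      (fun w w' f => by
        simp only [TensorProduct.tmul_add, map_add])
      (fun c w f => by
        simp only [TensorProduct.tmul_smul, map_smul, smul_eq_mul])
      (fun w f f' => by
        simp only [ctr, LinearMap.comp_apply, LinearMap.lTensor_add, LinearMap.add_apply,
          map_add])
      (fun c w f => by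
        simp only [ctr, LinearMap.comp_apply, LinearMap.lTensor_smul, LinearMap.smul_apply,
          map_smul, smul_eq_mul]) with hB
  set q : W →ₗ[K] W := ((Module.evalEquiv K W).symm.toLinearMap) ∘ₗ B with hq
  have hqf : ∀ (f : Module.Dual K W) (w : W), f (q w) = f₀ (ctr f (π (v₀ ⊗ₜ[K] w))) := by
    intro f w
    simp only [hq, LinearMap.comp_apply, LinearEquiv.coe_coe]
    rw [Module.apply_evalEquiv_symm_apply]
    rfl
  have key : ∀ (f : Module.Dual K W) (v : V) (w : W),
      ctr f (π (v ⊗ₜ[K] w)) = f (q w) • v := by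
    intro f v w
    obtain ⟨c, hc⟩ := schur f w
    have : f (q w) = c := by
      rw [hqf, hc, map_smul, hf₀, smul_eq_mul, mul_one]
    rw [this, hc]
  refine ⟨q, ?_⟩
  apply TensorProduct.ext'
  intro v w
  apply ctr_eq_of_forall
  intro f
  rw [LinearMap.lTensor_tmul, ctr_tmul, key]

end Proj

end AuxLemmas

open scoped TensorProduct

/-- If `E'` is an absolutely irreducible finite-dimensional
`K[G]`-module and `F'` an irreducible finite-dimensional `K[H]`-module (char `K` zero or
coprime to `|G|` and `|H|`), then `E' ⊗ F'` is an irreducible `K[G×H]`-module. -/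
theorem statement_15 {K : Type*} [Field K] {G H : Type*} [Group G] [Group H]
    [Fintype G] [Fintype H]
    {V W : Type*} [AddCommGroup V] [Module K V] [FiniteDimensional K V]
    [AddCommGroup W] [Module K W] [FiniteDimensional K W]
    (hchar : ringChar K = 0 ∨
      (Nat.Coprime (ringChar K) (Fintype.card G) ∧
        Nat.Coprime (ringChar K) (Fintype.card H)))
    (ρ : Representation K G V) (σ : Representation K H W)
    (hρ : RepAbsIrreducible ρ) (hσ : RepIrreducible σ) :
    RepIrreducible (repProdTensor ρ σ) := by
  classical
  have hGcard : (Fintype.card G : K) ≠ 0 := card_cast_ne_zero (hchar.imp id And.left)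
  have hV : Nontrivial V := nontrivial_of_absIrr ρ hρ
  have hW : Nontrivial W := hσ.1
  obtain ⟨v₀, f₀, hf₀, hv₀⟩ := exists_dual_pair (K := K) hV
  constructor
  · apply Module.nontrivial_of_finrank_pos (R := K)
    rw [Module.finrank_tensorProduct]
    exact Nat.mul_pos Module.finrank_pos Module.finrank_pos
  · intro p hp
    set τ : Representation K G (V ⊗[K] W) := (repProdTensor ρ σ).comp (MonoidHom.inl G H) with hτ
    have hτapp : ∀ g (x : V ⊗[K] W), τ g x = TensorProduct.map (ρ g) LinearMap.id x := by
      intro g x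
      show TensorProduct.map (ρ g) (σ 1) x = TensorProduct.map (ρ g) LinearMap.id x
      rw [map_one]
      rfl
    have hpτ : RepInvariant τ p := fun g x hx => hp (g, 1) x hx
    obtain ⟨π, hrange, hcomm⟩ := exists_equivariant_proj hGcard τ p hpτ
    obtain ⟨q, hπq⟩ := proj_eq_lTensor ρ hρ π (by
      intro g x
      rw [← hτapp, ← hτapp, hcomm])
    set S := LinearMap.range q with hS
    have hSinv : RepInvariant σ S := by
      rintro h _ ⟨w', rfl⟩
      have h1 : v₀ ⊗ₜ[K] (q w') ∈ p := by
        rw [← hrange]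
        exact ⟨v₀ ⊗ₜ[K] w', by rw [hπq, LinearMap.lTensor_tmul]⟩
      have h2 : v₀ ⊗ₜ[K] (σ h (q w')) ∈ p := by
        have h3 := hp (1, h) _ h1
        have h4 : repProdTensor ρ σ (1, h) (v₀ ⊗ₜ[K] (q w')) = v₀ ⊗ₜ[K] (σ h (q w')) := by
          show TensorProduct.map (ρ 1) (σ h) (v₀ ⊗ₜ[K] (q w')) = _
          rw [TensorProduct.map_tmul, map_one]
          rfl
        rwa [h4] at h3
      rw [← hrange] at h2
      obtain ⟨y, hy⟩ := h2
      rw [hπq] at hy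
      have h5 : ctr' f₀ (v₀ ⊗ₜ[K] (σ h (q w'))) = σ h (q w') := by
        rw [ctr'_tmul, hf₀, one_smul]
      rw [← h5, ← hy, ctr'_lTensor]
      exact ⟨_, rfl⟩
    rcases hσ.2 S hSinv with hSbot | hStop
    · left
      have hq0 : q = 0 := LinearMap.range_eq_bot.mp hSbot
      rw [← hrange, hπq, hq0, LinearMap.lTensor_zero, LinearMap.range_zero]
    · right
      have hqs : Function.Surjective q := LinearMap.range_eq_top.mp hStop
      rw [← hrange, hπq, LinearMap.range_eq_top]
      exact LinearMap.lTensor_surjective V hqs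
end

section
/- Let L be a Euclidean lattice spanning a finite-dimensional real inner product space E, let F₁ and F₂ be mutually orthogonal subspaces of E, let F₃ = F₁ ⊕ F₂, let π_i denote the orthogonal projection onto F_i for i = 1, 2, 3, and set L_i = L ∩ F_i. Then: (a) π₁ and π₂ induce injective ℤ-module homomorphisms L₃/(L₁ ⊕ L₂) → π₁(L)/L₁ and L₃/(L₁ ⊕ L₂) → π₂(L)/L₂; (b) there are natural surjective ℤ-module homomorphisms π₁(L)/L₁ → (π₁(L) ⊕ π₂(L))/π₃(L) and π₂(L)/L₂ → (π₁(L) ⊕ π₂(L))/π₃(L). -/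
open scoped RealInnerProductSpace Classical

section AuxLemmas

variable {E : Type*} [NormedAddCommGroup E] [InnerProductSpace ℝ E] [FiniteDimensional ℝ E]

lemma projMap_mem (F : Submodule ℝ E) (x : E) : projMap F x ∈ F := (F.orthogonalProjectionOnto x).2

lemma projMap_eq_self (F : Submodule ℝ E) {x : E} (hx : x ∈ F) : projMap F x = x :=
  F.starProjection_eq_self_iff.2 hx

lemma projMap_eq_zero (F : Submodule ℝ E) {x : E} (hx : x ∈ Fᗮ) : projMap F x = 0 := by
  show (F.orthogonalProjectionOnto x : E) = 0
  rw [Submodule.orthogonalProjectionOnto_apply_of_mem_orthogonal hx, Submodule.coe_zero]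

lemma proj_sum (F₁ F₂ F₃ : Submodule ℝ E) (h12 : F₂ ≤ F₁ᗮ) (h21 : F₁ ≤ F₂ᗮ)
    (hF₃ : F₃ = F₁ ⊔ F₂) (z : E) : projMap F₃ z = projMap F₁ z + projMap F₂ z := by
  subst hF₃
  show ((F₁ ⊔ F₂).orthogonalProjectionOnto z : E) = _
  apply Submodule.eq_starProjection_of_mem_orthogonal
  · exact add_mem (Submodule.mem_sup_left (projMap_mem F₁ z))
      (Submodule.mem_sup_right (projMap_mem F₂ z))
  · rw [← Submodule.inf_orthogonal, Submodule.mem_inf]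
    constructor
    · have h1 : z - projMap F₁ z ∈ F₁ᗮ := F₁.sub_starProjection_mem_orthogonal z
      have h2 : projMap F₂ z ∈ F₁ᗮ := h12 (projMap_mem F₂ z)
      have := sub_mem h1 h2
      simpa [sub_sub] using this
    · have h1 : z - projMap F₂ z ∈ F₂ᗮ := F₂.sub_starProjection_mem_orthogonal z
      have h2 : projMap F₁ z ∈ F₂ᗮ := h21 (projMap_mem F₁ z)
      have := sub_mem h1 h2
      have e : z - projMap F₂ z - projMap F₁ z = z - (projMap F₁ z + projMap F₂ z) := by abel
      rwa [e] at this

end AuxLemmas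

/-- Let `F₁ ⊥ F₂` be orthogonal subspaces of `E`, `F₃ = F₁ ⊕ F₂`,
`Lᵢ = L ∩ Fᵢ`. Then (a) the projections `π₁`, `π₂` induce injections
`L₃/(L₁ ⊕ L₂) ↪ πᵢ(L)/Lᵢ`, and (b) there are natural surjections
`πᵢ(L)/Lᵢ ↠ (π₁(L) ⊕ π₂(L))/π₃(L)`. -/
theorem statement_19 {E : Type*} [NormedAddCommGroup E] [InnerProductSpace ℝ E]
    [FiniteDimensional ℝ E] (L : Submodule ℤ E) (hL : IsEucLattice L)
    (F₁ F₂ F₃ : Submodule ℝ E)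
    (horth : ∀ x ∈ F₁, ∀ y ∈ F₂, ⟪x, y⟫ = 0) (hF₃ : F₃ = F₁ ⊔ F₂)
    (L₁ L₂ L₃ : Submodule ℤ E)
    (hL₁ : L₁ = L ⊓ F₁.restrictScalars ℤ) (hL₂ : L₂ = L ⊓ F₂.restrictScalars ℤ)
    (hL₃ : L₃ = L ⊓ F₃.restrictScalars ℤ) (hL₃L : L₃ ≤ L) :
    (∃ f : (↥L₃ ⧸ Submodule.comap L₃.subtype (L₁ ⊔ L₂)) →ₗ[ℤ]
        (↥(projLat F₁ L) ⧸ Submodule.comap (projLat F₁ L).subtype L₁),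
      Function.Injective f ∧
      ∀ (x : E) (hx : x ∈ L₃),
        f (Submodule.Quotient.mk ⟨x, hx⟩) =
          Submodule.Quotient.mk ⟨projMap F₁ x, projMap_mem_projLat F₁ L (hL₃L hx)⟩) ∧
    (∃ f : (↥L₃ ⧸ Submodule.comap L₃.subtype (L₁ ⊔ L₂)) →ₗ[ℤ]
        (↥(projLat F₂ L) ⧸ Submodule.comap (projLat F₂ L).subtype L₂),
      Function.Injective f ∧
      ∀ (x : E) (hx : x ∈ L₃),
        f (Submodule.Quotient.mk ⟨x, hx⟩) =
          Submodule.Quotient.mk ⟨projMap F₂ x, projMap_mem_projLat F₂ L (hL₃L hx)⟩) ∧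
    (∃ f : (↥(projLat F₁ L) ⧸ Submodule.comap (projLat F₁ L).subtype L₁) →ₗ[ℤ]
        (↥(projLat F₁ L ⊔ projLat F₂ L) ⧸
          Submodule.comap (projLat F₁ L ⊔ projLat F₂ L).subtype (projLat F₃ L)),
      Function.Surjective f ∧
      ∀ (y : E) (hy : y ∈ projLat F₁ L),
        f (Submodule.Quotient.mk ⟨y, hy⟩) =
          Submodule.Quotient.mk ⟨y, Submodule.mem_sup_left hy⟩) ∧
    (∃ f : (↥(projLat F₂ L) ⧸ Submodule.comap (projLat F₂ L).subtype L₂) →ₗ[ℤ]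
        (↥(projLat F₁ L ⊔ projLat F₂ L) ⧸
          Submodule.comap (projLat F₁ L ⊔ projLat F₂ L).subtype (projLat F₃ L)),
      Function.Surjective f ∧
      ∀ (y : E) (hy : y ∈ projLat F₂ L),
        f (Submodule.Quotient.mk ⟨y, hy⟩) =
          Submodule.Quotient.mk ⟨y, Submodule.mem_sup_right hy⟩) := by
  have h12 : F₂ ≤ F₁ᗮ := fun y hy => (Submodule.mem_orthogonal F₁ y).2 fun x hx => horth x hx y hy
  have h21 : F₁ ≤ F₂ᗮ := fun x hx => (Submodule.mem_orthogonal F₂ x).2 fun y hy => by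
    rw [real_inner_comm]; exact horth x hx y hy
  have hsum : ∀ z : E, projMap F₃ z = projMap F₁ z + projMap F₂ z :=
    proj_sum F₁ F₂ F₃ h12 h21 hF₃
  have hdecomp : ∀ x ∈ F₃, projMap F₁ x + projMap F₂ x = x := fun x hx => by
    rw [← hsum, projMap_eq_self F₃ hx]
  refine ⟨?_, ?_, ?_, ?_⟩
  · -- (a) injection into π₁(L)/L₁
    set P := Submodule.comap (projLat F₁ L).subtype L₁ with hP
    set g : ↥L₃ →ₗ[ℤ] ↥(projLat F₁ L) ⧸ P :=
      P.mkQ.comp (LinearMap.codRestrict _ ((projMap F₁).comp L₃.subtype)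
        (fun x => projMap_mem_projLat F₁ L (hL₃L x.2))) with hg
    have hgker : ∀ x : ↥L₃, g x = 0 ↔ projMap F₁ (x : E) ∈ L₁ := by
      intro x
      simp [hg, hP, Submodule.Quotient.mk_eq_zero, Submodule.mem_comap]
    have hker : Submodule.comap L₃.subtype (L₁ ⊔ L₂) ≤ LinearMap.ker g := by
      intro x hx
      rw [Submodule.mem_comap] at hx
      obtain ⟨a, ha, b, hb, hab⟩ := Submodule.mem_sup.1 hx
      have hab' : a + b = (x : E) := hab
      rw [LinearMap.mem_ker, hgker]
      have ha2 : a ∈ F₁ := by rw [hL₁] at ha; exact ha.2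
      have hb2 : b ∈ F₂ := by rw [hL₂] at hb; exact hb.2
      have : projMap F₁ (x : E) = a := by
        rw [← hab', map_add, projMap_eq_self F₁ ha2,
          projMap_eq_zero F₁ (h12 hb2), add_zero]
      rw [this]; exact ha
    refine ⟨Submodule.liftQ _ g hker, ?_, fun x hx => rfl⟩
    rw [← LinearMap.ker_eq_bot]
    apply Submodule.ker_liftQ_eq_bot
    intro x hx
    rw [LinearMap.mem_ker, hgker] at hx
    rw [Submodule.mem_comap]
    have hx3 : (x : E) ∈ L ⊓ F₃.restrictScalars ℤ := by rw [← hL₃]; exact x.2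
    have hx1 := hx
    rw [hL₁] at hx1
    have hxF : (x : E) ∈ F₃ := hx3.2
    have hbL : (x : E) - projMap F₁ (x : E) ∈ L := sub_mem hx3.1 hx1.1
    have hbF : (x : E) - projMap F₁ (x : E) ∈ F₂ := by
      have e : (x : E) - projMap F₁ (x : E) = projMap F₂ (x : E) :=
        (eq_sub_of_add_eq' (hdecomp (x : E) hxF)).symm
      rw [e]; exact projMap_mem F₂ _
    have hbL₂ : (x : E) - projMap F₁ (x : E) ∈ L₂ := by
      rw [hL₂]; exact ⟨hbL, hbF⟩
    exact Submodule.mem_sup.2 ⟨projMap F₁ (x : E), hx,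
      (x : E) - projMap F₁ (x : E), hbL₂, by abel⟩
  · -- (a) injection into π₂(L)/L₂
    set P := Submodule.comap (projLat F₂ L).subtype L₂ with hP
    set g : ↥L₃ →ₗ[ℤ] ↥(projLat F₂ L) ⧸ P :=
      P.mkQ.comp (LinearMap.codRestrict _ ((projMap F₂).comp L₃.subtype)
        (fun x => projMap_mem_projLat F₂ L (hL₃L x.2))) with hg
    have hgker : ∀ x : ↥L₃, g x = 0 ↔ projMap F₂ (x : E) ∈ L₂ := by
      intro x
      simp [hg, hP, Submodule.Quotient.mk_eq_zero, Submodule.mem_comap]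
    have hker : Submodule.comap L₃.subtype (L₁ ⊔ L₂) ≤ LinearMap.ker g := by
      intro x hx
      rw [Submodule.mem_comap] at hx
      obtain ⟨a, ha, b, hb, hab⟩ := Submodule.mem_sup.1 hx
      have hab' : a + b = (x : E) := hab
      rw [LinearMap.mem_ker, hgker]
      have ha2 : a ∈ F₁ := by rw [hL₁] at ha; exact ha.2
      have hb2 : b ∈ F₂ := by rw [hL₂] at hb; exact hb.2
      have : projMap F₂ (x : E) = b := by
        rw [← hab', map_add, projMap_eq_self F₂ hb2,
          projMap_eq_zero F₂ (h21 ha2), zero_add]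
      rw [this]; exact hb
    refine ⟨Submodule.liftQ _ g hker, ?_, fun x hx => rfl⟩
    rw [← LinearMap.ker_eq_bot]
    apply Submodule.ker_liftQ_eq_bot
    intro x hx
    rw [LinearMap.mem_ker, hgker] at hx
    rw [Submodule.mem_comap]
    have hx3 : (x : E) ∈ L ⊓ F₃.restrictScalars ℤ := by rw [← hL₃]; exact x.2
    have hx2 := hx
    rw [hL₂] at hx2
    have hxF : (x : E) ∈ F₃ := hx3.2
    have haL : (x : E) - projMap F₂ (x : E) ∈ L := sub_mem hx3.1 hx2.1
    have haF : (x : E) - projMap F₂ (x : E) ∈ F₁ := by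
      have e : (x : E) - projMap F₂ (x : E) = projMap F₁ (x : E) :=
        (eq_sub_of_add_eq (hdecomp (x : E) hxF)).symm
      rw [e]; exact projMap_mem F₁ _
    have haL₁ : (x : E) - projMap F₂ (x : E) ∈ L₁ := by
      rw [hL₁]; exact ⟨haL, haF⟩
    exact Submodule.mem_sup.2 ⟨(x : E) - projMap F₂ (x : E), haL₁,
      projMap F₂ (x : E), hx, by abel⟩
  · -- (b) surjection from π₁(L)/L₁
    set Q := Submodule.comap (projLat F₁ L ⊔ projLat F₂ L).subtype (projLat F₃ L) with hQ
    set g : ↥(projLat F₁ L) →ₗ[ℤ] ↥(projLat F₁ L ⊔ projLat F₂ L) ⧸ Q :=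
      Q.mkQ.comp (Submodule.inclusion le_sup_left) with hg
    have hker : Submodule.comap (projLat F₁ L).subtype L₁ ≤ LinearMap.ker g := by
      intro y hy
      rw [Submodule.mem_comap] at hy
      have hy1 := hy
      rw [hL₁] at hy1
      have h1 : (y : E) ∈ projLat F₃ L := by
        have : projMap F₃ (y : E) = (y : E) :=
          projMap_eq_self F₃ (by rw [hF₃]; exact Submodule.mem_sup_left hy1.2)
        rw [← this]; exact projMap_mem_projLat F₃ L hy1.1
      simp [hg, hQ, Submodule.Quotient.mk_eq_zero, Submodule.mem_comap, h1]
    refine ⟨Submodule.liftQ _ g hker, ?_, fun y hy => rfl⟩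
    intro c
    obtain ⟨w, rfl⟩ := Submodule.Quotient.mk_surjective _ c
    obtain ⟨y₁, hy₁, y₂, hy₂, hw⟩ := Submodule.mem_sup.1 w.2
    obtain ⟨z, hz, hzeq⟩ := hy₂
    set u : ↥(projLat F₁ L) := ⟨y₁ - projMap F₁ z,
      sub_mem hy₁ (projMap_mem_projLat F₁ L hz)⟩ with hu
    refine ⟨Submodule.Quotient.mk u, ?_⟩
    show Submodule.Quotient.mk (Submodule.inclusion le_sup_left u) = Submodule.Quotient.mk w
    rw [Submodule.Quotient.eq, hQ, Submodule.mem_comap, map_sub]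
    have hcoe : (projLat F₁ L ⊔ projLat F₂ L).subtype (Submodule.inclusion le_sup_left u)
        = y₁ - projMap F₁ z := rfl
    have hcoe2 : (projLat F₁ L ⊔ projLat F₂ L).subtype w = y₁ + y₂ := hw.symm
    rw [hcoe, hcoe2]
    have e : y₁ - projMap F₁ z - (y₁ + y₂) = -(projMap F₃ z) := by
      rw [hsum, ← hzeq]; abel
    rw [e]
    exact neg_mem (projMap_mem_projLat F₃ L hz)
  · -- (b) surjection from π₂(L)/L₂
    set Q := Submodule.comap (projLat F₁ L ⊔ projLat F₂ L).subtype (projLat F₃ L) with hQ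
    set g : ↥(projLat F₂ L) →ₗ[ℤ] ↥(projLat F₁ L ⊔ projLat F₂ L) ⧸ Q :=
      Q.mkQ.comp (Submodule.inclusion le_sup_right) with hg
    have hker : Submodule.comap (projLat F₂ L).subtype L₂ ≤ LinearMap.ker g := by
      intro y hy
      rw [Submodule.mem_comap] at hy
      have hy2 := hy
      rw [hL₂] at hy2
      have h1 : (y : E) ∈ projLat F₃ L := by
        have : projMap F₃ (y : E) = (y : E) :=
          projMap_eq_self F₃ (by rw [hF₃]; exact Submodule.mem_sup_right hy2.2)
        rw [← this]; exact projMap_mem_projLat F₃ L hy2.1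
      simp [hg, hQ, Submodule.Quotient.mk_eq_zero, Submodule.mem_comap, h1]
    refine ⟨Submodule.liftQ _ g hker, ?_, fun y hy => rfl⟩
    intro c
    obtain ⟨w, rfl⟩ := Submodule.Quotient.mk_surjective _ c
    obtain ⟨y₁, hy₁, y₂, hy₂, hw⟩ := Submodule.mem_sup.1 w.2
    obtain ⟨z, hz, hzeq⟩ := hy₁
    set u : ↥(projLat F₂ L) := ⟨y₂ - projMap F₂ z,
      sub_mem hy₂ (projMap_mem_projLat F₂ L hz)⟩ with hu
    refine ⟨Submodule.Quotient.mk u, ?_⟩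
    show Submodule.Quotient.mk (Submodule.inclusion le_sup_right u) = Submodule.Quotient.mk w
    rw [Submodule.Quotient.eq, hQ, Submodule.mem_comap, map_sub]
    have hcoe : (projLat F₁ L ⊔ projLat F₂ L).subtype (Submodule.inclusion le_sup_right u)
        = y₂ - projMap F₂ z := rfl
    have hcoe2 : (projLat F₁ L ⊔ projLat F₂ L).subtype w = y₁ + y₂ := hw.symm
    rw [hcoe, hcoe2]
    have e : y₂ - projMap F₂ z - (y₁ + y₂) = -(projMap F₃ z) := by
      rw [hsum, ← hzeq]; abel
    rw [e]
    exact neg_mem (projMap_mem_projLat F₃ L hz)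
end
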